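/- arXiv:1902.09980 — 2 statements merged into one kernel-verified Lean document; each statement's English description precedes it below -/
import Mathlib

section
/- In a single-decision causal influence diagram model, if a node X (not a descendant of the decision D) is d-separated from every utility node that descends from D by the conditioning set {D} ∪ Pa_D \ {X}, then for every parameterization there exists an optimal policy whose decision does not depend on X; hence the optimal value with the information link X→D equals the optimal value without it (no observation incentive for X). -/
/-- A directed acyclic graph on node set `V`. -/
structure DAG (V : Type) where
  E : V → V → Prop
  acyclic : ∀ v, ¬ Relation.TransGen E v v

namespace DAG

variable {V : Type}

/-- A three-node segment `a — b — c` of an undirected path is active given `Z`: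
colliders are active iff some descendant of the middle node (including itself) is in `Z`,
chains and forks are active iff the middle node is not in `Z`. -/
def ActiveTriple (G : DAG V) (Z : Set V) (a b c : V) : Prop :=
  (G.E a b ∧ G.E c b ∧ ∃ w, Relation.ReflTransGen G.E b w ∧ w ∈ Z) ∨
  (¬ (G.E a b ∧ G.E c b) ∧ b ∉ Z)

/-- An undirected path: consecutive nodes are joined by an edge in either direction. -/
def IsUPath (G : DAG V) : List V → Prop
  | [] => False
  | [_] => True
  | x :: y :: rest => (G.E x y ∨ G.E y x) ∧ IsUPath G (y :: rest)

/-- A path is active given `Z` if every three-node segment is active. -/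
def ActivePath (G : DAG V) (Z : Set V) : List V → Prop
  | x :: y :: z :: rest => ActiveTriple G Z x y z ∧ ActivePath G Z (y :: z :: rest)
  | _ => True

/-- `x` and `y` are d-connected given `Z` if some undirected path between them is active. -/
def DConn (G : DAG V) (Z : Set V) (x y : V) : Prop :=
  ∃ p : List V, p.Nodup ∧ G.IsUPath p ∧ p.head? = some x ∧ p.getLast? = some y ∧
    G.ActivePath Z p

end DAG

/-- A single-decision causal influence diagram graph: a DAG with a decision node `dec`
and a set of utility nodes `util`. -/
structure CID (V : Type) extends DAG V where
  dec : V
  util : Finset V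
  dec_not_util : dec ∉ util

/-- A directed path (allowing length 0) from `x` to `u` that avoids the node `d`. -/
def DirPathAvoiding {V : Type} (E : V → V → Prop) (x u d : V) : Prop :=
  ∃ p : List V, p ≠ [] ∧ p.head? = some x ∧ p.getLast? = some u ∧
    List.Chain' E p ∧ d ∉ p

namespace CID

variable {V : Type}

/-- The decision context: the parents (observations) of the decision node. -/
def Pa (C : CID V) : Set V := {u | C.E u C.dec}

/-- An observation `O ∈ Pa_D` is requisite if it is d-connected to a utility node
descending from the decision, conditioning on `{D} ∪ Pa_D \ {O}`. -/
def Requisite (C : CID V) (O : V) : Prop :=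
  O ∈ C.Pa ∧ ∃ u ∈ C.util, Relation.ReflTransGen C.E C.dec u ∧
    C.toDAG.DConn ({C.dec} ∪ (C.Pa \ {O})) O u

/-- A nonrequisite observation. -/
def Nonrequisite (C : CID V) (O : V) : Prop :=
  O ∈ C.Pa ∧ ¬ C.Requisite O

/-- The edge relation of the reduced graph `G*`: all nonrequisite information links
(edges into the decision from nonrequisite observations) are removed. -/
def Ered (C : CID V) : V → V → Prop :=
  fun u v => C.E u v ∧ (v = C.dec → C.Requisite u)

/-- A parameterization of a CID graph: finite domains for every node, conditional
probability distributions for every non-decision node, and a real-valued interpretation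
of the outcomes of the (utility) nodes. -/
structure Param [Fintype V] [DecidableEq V] (C : CID V) (val : V → Type)
    [∀ v, Fintype (val v)] where
  cpt : ∀ _v : V, (∀ u : V, val u) → ℝ
  cpt_nonneg : ∀ v a, 0 ≤ cpt v a
  cpt_local : ∀ v, v ≠ C.dec → ∀ a b, a v = b v → (∀ u, C.E u v → a u = b u) →
    cpt v a = cpt v b
  cpt_sum : ∀ v, v ≠ C.dec → ∀ a : ∀ u : V, val u,
    ∑ x : val v, cpt v (Function.update a v x) = 1
  uval : ∀ v : V, val v → ℝ

/-- A policy whose decision may depend (only) on the observations in `Obs`: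
a conditional distribution for the decision given the values of the nodes in `Obs`. -/
structure Pol [Fintype V] [DecidableEq V] (C : CID V) (val : V → Type)
    [∀ v, Fintype (val v)] (Obs : Set V) where
  p : (∀ v : V, val v) → ℝ
  nonneg : ∀ a, 0 ≤ p a
  depends : ∀ a b, a C.dec = b C.dec → (∀ u ∈ Obs, a u = b u) → p a = p b
  sum : ∀ a : ∀ v : V, val v, ∑ d : val C.dec, p (Function.update a C.dec d) = 1

/-- The value (expected sum of utilities) of a decision rule `p` under a
parameterization `P`. -/
noncomputable def value [Fintype V] [DecidableEq V] (C : CID V) {val : V → Type}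
    [∀ v, Fintype (val v)] (P : C.Param val) (p : (∀ v : V, val v) → ℝ) : ℝ :=
  ∑ a : ∀ v : V, val v,
    (p a * ∏ v ∈ Finset.univ.erase C.dec, P.cpt v a) * ∑ u ∈ C.util, P.uval u (a u)

end CID


namespace OI
variable {V : Type}

/-- Chains of triples, mirroring `DAG.ActivePath`. -/
def TChain (T : V → V → V → Prop) : List V → Prop
  | x :: y :: z :: r => T x y z ∧ TChain T (y :: z :: r)
  | _ => True

theorem tchain_cons3 {T : V → V → V → Prop} {x y z : V} {r : List V} :
    TChain T (x :: y :: z :: r) ↔ T x y z ∧ TChain T (y :: z :: r) := Iff.rfl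

theorem tchain_tail {T : V → V → V → Prop} {x : V} {l : List V}
    (h : TChain T (x :: l)) : TChain T l := by
  match l with
  | [] => trivial
  | [_] => trivial
  | y :: z :: r => exact h.2

theorem tchain_suffix {T : V → V → V → Prop} {s t : List V}
    (h : TChain T (s ++ t)) : TChain T t := by
  induction s with
  | nil => exact h
  | cons x s ih => exact ih (tchain_tail h)

theorem tchain_prefix {T : V → V → V → Prop} {t : List V} :
    ∀ {s : List V}, TChain T (s ++ t) → TChain T s := by
  intro s
  induction s with
  | nil => intro _; trivial
  | cons x s ih =>
    intro h
    cases s with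
    | nil => trivial
    | cons y s' =>
      cases s' with
      | nil => trivial
      | cons z s'' => exact ⟨h.1, ih h.2⟩

theorem tchain_glue {T : V → V → V → Prop} :
    ∀ (s : List V) (m : V) (t : List V),
      TChain T (s ++ [m]) → TChain T (m :: t) →
      (∀ x y, s.getLast? = some x → t.head? = some y → T x m y) →
      TChain T (s ++ m :: t) := by
  intro s
  induction s with
  | nil => intro m t _ ht _; exact ht
  | cons x s ih =>
    intro m t hs ht hseam
    cases s with
    | nil =>
      cases t with
      | nil => trivial
      | cons y t' => exact ⟨hseam x y rfl rfl, ht⟩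
    | cons y s' =>
      have ih' := ih m t (tchain_tail hs) ht
        (fun x' y' hx hy => hseam x' y' (by rw [List.getLast?_cons_cons]; exact hx) hy)
      cases s' with
      | nil => exact ⟨hs.1, ih'⟩
      | cons z s'' => exact ⟨hs.1, ih'⟩

open Classical in
/-- Count of bad triples along a list. -/
noncomputable def bcnt (bad : V → V → V → Prop) : List V → ℕ
  | x :: y :: z :: r => (if bad x y z then 1 else 0) + bcnt bad (y :: z :: r)
  | _ => 0

theorem bcnt_low {bad : V → V → V → Prop} {l : List V} (h : l.length ≤ 2) :
    bcnt bad l = 0 := by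
  match l, h with
  | [], _ => rfl
  | [_], _ => rfl
  | [_, _], _ => rfl

open Classical in
theorem bcnt_cons3 {bad : V → V → V → Prop} {x y z : V} {r : List V} :
    bcnt bad (x :: y :: z :: r) = (if bad x y z then 1 else 0) + bcnt bad (y :: z :: r) := rfl

open Classical in
theorem bcnt_append {bad : V → V → V → Prop} :
    ∀ (s : List V) (m : V) (t : List V),
      bcnt bad (s ++ m :: t) =
        bcnt bad (s ++ [m]) +
          (s.getLast?.elim 0 fun x => t.head?.elim 0 fun y => if bad x m y then 1 else 0) +
          bcnt bad (m :: t) := by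
  intro s
  induction s with
  | nil => intro m t; simp [bcnt_low]
  | cons x s ih =>
    intro m t
    cases s with
    | nil =>
      cases t with
      | nil => simp [bcnt_low]
      | cons y t' =>
        show bcnt bad (x :: m :: y :: t') = _
        rw [bcnt_cons3]
        have h0 : bcnt bad [x, m] = 0 := rfl
        simp only [List.nil_append, List.singleton_append, List.getLast?_singleton,
          List.head?_cons, Option.elim, h0]
        omega
    | cons y s' =>
      have h2 := ih m t
      simp only [List.cons_append] at h2 ⊢
      cases s' with
      | nil =>
        simp only [List.nil_append] at h2 ⊢
        rw [bcnt_cons3, h2, bcnt_cons3]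
        simp only [List.getLast?_cons_cons, List.getLast?_singleton]
        omega
      | cons z s'' =>
        simp only [List.cons_append] at h2 ⊢
        rw [bcnt_cons3, h2, bcnt_cons3]
        simp only [List.getLast?_cons_cons]
        omega

theorem tchain_imp {T T' : V → V → V → Prop} {bad : V → V → V → Prop}
    (himp : ∀ a b c, T a b c → ¬ bad a b c → T' a b c) :
    ∀ {l : List V}, TChain T l → bcnt bad l = 0 → TChain T' l := by
  intro l
  induction l with
  | nil => intro _ _; trivial
  | cons x l ih =>
    intro h hb
    cases l with
    | nil => trivial
    | cons y l' =>
      cases l' with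
      | nil => trivial
      | cons z r =>
        rw [bcnt_cons3] at hb
        have h1 : ¬ bad x y z := by
          by_contra hbad
          simp [hbad] at hb
        exact ⟨himp _ _ _ h.1 h1, ih h.2 (by omega)⟩

theorem bcnt_split {bad : V → V → V → Prop} :
    ∀ {l : List V}, bcnt bad l ≠ 0 →
      ∃ s a b c t, l = s ++ a :: b :: c :: t ∧ bad a b c := by
  intro l
  induction l with
  | nil => intro h; exact absurd rfl h
  | cons x l ih =>
    intro h
    cases l with
    | nil => exact absurd rfl h
    | cons y l' =>
      cases l' with
      | nil => exact absurd rfl h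
      | cons z r =>
        rw [bcnt_cons3] at h
        by_cases hb : bad x y z
        · exact ⟨[], x, y, z, r, rfl, hb⟩
        · have : bcnt bad (y :: z :: r) ≠ 0 := by simpa [hb] using h
          obtain ⟨s, a, b, c, t, he, hbad⟩ := ih this
          exact ⟨x :: s, a, b, c, t, by rw [he, List.cons_append], hbad⟩

theorem not_nodup_split {l : List V} (h : ¬ l.Nodup) :
    ∃ (l₁ : List V) (v : V) (l₂ l₃ : List V), l = l₁ ++ v :: l₂ ++ v :: l₃ := by
  induction l with
  | nil => exact absurd List.nodup_nil h
  | cons x l ih =>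
    by_cases hx : x ∈ l
    · obtain ⟨s, t, rfl⟩ := List.append_of_mem hx
      exact ⟨[], x, s, t, rfl⟩
    · have : ¬ l.Nodup := fun hn => h (List.nodup_cons.mpr ⟨hx, hn⟩)
      obtain ⟨l₁, v, l₂, l₃, rfl⟩ := ih this
      exact ⟨x :: l₁, v, l₂, l₃, rfl⟩

theorem rtg_to_list {E : V → V → Prop} {x y : V} (h : Relation.ReflTransGen E x y) :
    ∃ d : List V, d.head? = some x ∧ d.getLast? = some y ∧ List.Chain' E d ∧
      ∀ v ∈ d, Relation.ReflTransGen E x v ∧ Relation.ReflTransGen E v y := by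
  induction h using Relation.ReflTransGen.head_induction_on with
  | refl =>
    refine ⟨[y], rfl, rfl, List.isChain_singleton y, ?_⟩
    intro v hv
    rcases List.mem_singleton.mp hv with rfl
    exact ⟨Relation.ReflTransGen.refl, Relation.ReflTransGen.refl⟩
  | @head x' m hxm hmy ih =>
    obtain ⟨d, hd1, hd2, hd3, hd4⟩ := ih
    have hdne : d ≠ [] := by rintro rfl; simp at hd1
    refine ⟨x' :: d, rfl, ?_, ?_, ?_⟩
    · rw [show x' :: d = [x'] ++ d from rfl, List.getLast?_append_of_ne_nil _ hdne]
      exact hd2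
    · show List.IsChain E (x' :: d)
      rw [List.isChain_cons]
      refine ⟨fun z hz => ?_, hd3⟩
      rw [hd1, Option.mem_def, Option.some.injEq] at hz
      subst hz
      exact hxm
    · intro v hv
      rcases List.mem_cons.mp hv with rfl | hv
      · exact ⟨Relation.ReflTransGen.refl, Relation.ReflTransGen.head hxm hmy⟩
      · exact ⟨Relation.ReflTransGen.head hxm (hd4 v hv).1, (hd4 v hv).2⟩

theorem list_to_rtg {E : V → V → Prop} :
    ∀ {d : List V} {x v : V}, List.Chain' E d → d.head? = some x → v ∈ d →
      Relation.ReflTransGen E x v := by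
  intro d
  induction d with
  | nil => intro x v _ _ hv; simp at hv
  | cons a d ih =>
    intro x v hc hh hv
    rw [List.head?_cons, Option.some.injEq] at hh
    subst hh
    rcases List.mem_cons.mp hv with rfl | hv
    · exact Relation.ReflTransGen.refl
    · cases d with
      | nil => simp at hv
      | cons b d' =>
        have h2 := List.isChain_cons_cons.mp hc
        exact Relation.ReflTransGen.head h2.1 (ih h2.2 rfl hv)

theorem chain_mem_transGen {E : V → V → Prop} {t : List V} {x v : V}
    (hc : List.Chain' E (x :: t)) (hv : v ∈ t) : Relation.TransGen E x v := by
  cases t with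
  | nil => simp at hv
  | cons y t' =>
    have h2 := List.isChain_cons_cons.mp hc
    exact Relation.TransGen.head' h2.1 (list_to_rtg h2.2 rfl hv)

end OI
section GraphDefs
variable {V : Type} (C : CID V) (X : V)

open Relation

/-- The conditioning set. -/
def Zs : Set V := {C.dec} ∪ (C.Pa \ {X})

/-- Utility nodes downstream of the decision. -/
def U1s : Set V := {u | u ∈ C.util ∧ ReflTransGen C.E C.dec u}

/-- Anchor nodes. -/
def Anch : Set V := insert X (Zs C X ∪ U1s C)

/-- Ancestral closure of the anchors. -/
def AnS : Set V := {v | ∃ α ∈ Anch C X, ReflTransGen C.E v α}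

/-- Moral adjacency within the ancestral set, off the conditioning set. -/
def Madj : V → V → Prop := fun u w =>
  (u ∈ AnS C X ∧ u ∉ Zs C X) ∧ (w ∈ AnS C X ∧ w ∉ Zs C X) ∧
    (C.E u w ∨ C.E w u ∨ ∃ c ∈ AnS C X, C.E u c ∧ C.E w c)

/-- The moral connected component of `X`. -/
def Rs : Set V := {w | ReflTransGen (Madj C X) X w}

/-- Quasi-active triples: colliders must have a descendant in `Z` or lie in the
ancestral set; non-colliders must avoid `Z`. -/
def QT : V → V → V → Prop := fun a b c =>
  (C.E a b ∧ C.E c b ∧ ((∃ w, ReflTransGen C.E b w ∧ w ∈ Zs C X) ∨ b ∈ AnS C X)) ∨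
    (¬ (C.E a b ∧ C.E c b) ∧ b ∉ Zs C X)

/-- Bad triples: colliders with no descendant in `Z`. -/
def Bad1 : V → V → V → Prop := fun a b c =>
  C.E a b ∧ C.E c b ∧ ¬ ∃ w, ReflTransGen C.E b w ∧ w ∈ Zs C X

variable {C X}

theorem no_self_edge {v : V} (h : C.E v v) : False :=
  C.acyclic v (Relation.TransGen.single h)

theorem no_two_cycle {u v : V} (h : C.E u v) (h2 : C.E v u) : False :=
  C.acyclic u (Relation.TransGen.head h (Relation.TransGen.single h2))

theorem cyc_edge_rtg {u v : V} (h : C.E u v) (h2 : Relation.ReflTransGen C.E v u) : False :=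
  C.acyclic u (Relation.TransGen.head' h h2)

theorem anS_parent {v w : V} (hv : v ∈ AnS C X) (h : C.E w v) : w ∈ AnS C X := by
  obtain ⟨α, hα, hr⟩ := hv
  exact ⟨α, hα, Relation.ReflTransGen.head h hr⟩

theorem rs_sub (hX : X ≠ C.dec) {w : V} (hw : w ∈ Rs C X) :
    w ∈ AnS C X ∧ w ∉ Zs C X := by
  have hXZ : X ∉ Zs C X := by
    intro h
    rcases h with h | h
    · exact hX h
    · exact h.2 rfl
  induction hw with
  | refl => exact ⟨⟨X, Or.inl rfl, Relation.ReflTransGen.refl⟩, hXZ⟩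
  | tail _ hbc _ => exact hbc.2.1

theorem rs_sub' (hX : X ≠ C.dec) {w : V} (hw : w ∈ Rs C X) : w ∈ AnS C X :=
  (rs_sub hX hw).1

/-- QT holds at any middle node in the ancestral set off `Z`. -/
theorem qt_of_mid {a b c : V} (hb : b ∈ AnS C X) (hbz : b ∉ Zs C X) : QT C X a b c := by
  by_cases h : C.E a b ∧ C.E c b
  · exact Or.inl ⟨h.1, h.2, Or.inr hb⟩
  · exact Or.inr ⟨h, hbz⟩

/-- QT along a directed path avoiding `Z`. -/
theorem qt_dir {a b c : V} (h1 : C.E a b) (h2 : C.E b c) (hbz : b ∉ Zs C X) : QT C X a b c :=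
  Or.inr ⟨fun hh => no_two_cycle h2 hh.2, hbz⟩

/-- QT when the middle node has an outgoing edge to the left. -/
theorem qt_out_left {a b c : V} (h1 : C.E b a) (hbz : b ∉ Zs C X) : QT C X a b c :=
  Or.inr ⟨fun hh => no_two_cycle hh.1 h1, hbz⟩

/-- QT when the middle node has an outgoing edge to the right. -/
theorem qt_out_right {a b c : V} (h1 : C.E b c) (hbz : b ∉ Zs C X) : QT C X a b c :=
  Or.inr ⟨fun hh => no_two_cycle h1 hh.2, hbz⟩

end GraphDefs

section Bridges
variable {V : Type} {G : DAG V} {Z : Set V}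

theorem isUPath_iff : ∀ {l : List V},
    G.IsUPath l ↔ l ≠ [] ∧ List.Chain' (fun a b => G.E a b ∨ G.E b a) l := by
  intro l
  induction l with
  | nil => simp [DAG.IsUPath]
  | cons x l ih =>
    cases l with
    | nil => simp [DAG.IsUPath, List.Chain']
    | cons y l' =>
      rw [show G.IsUPath (x :: y :: l') ↔ (G.E x y ∨ G.E y x) ∧ G.IsUPath (y :: l') from Iff.rfl,
        ih]
      simp only [List.Chain']
      rw [List.isChain_cons_cons]
      constructor
      · rintro ⟨h1, _, h2⟩; exact ⟨by simp, h1, h2⟩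
      · rintro ⟨_, h1, h2⟩; exact ⟨h1, by simp, h2⟩

theorem activePath_iff : ∀ {l : List V},
    G.ActivePath Z l ↔ OI.TChain (G.ActiveTriple Z) l := by
  intro l
  induction l with
  | nil => simp [DAG.ActivePath, OI.TChain]
  | cons x l ih =>
    cases l with
    | nil => simp [DAG.ActivePath, OI.TChain]
    | cons y l' =>
      cases l' with
      | nil => simp [DAG.ActivePath, OI.TChain]
      | cons z r =>
        rw [show G.ActivePath Z (x :: y :: z :: r) ↔
            G.ActiveTriple Z x y z ∧ G.ActivePath Z (y :: z :: r) from Iff.rfl,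
          OI.tchain_cons3, ih]

end Bridges
section Splice
variable {V : Type} {C : CID V} {Z : Set V}

theorem tchain_at {T : V → V → V → Prop} {l s t : List V} {a b c : V}
    (h : OI.TChain T l) (he : l = s ++ a :: b :: c :: t) : T a b c := by
  subst he
  exact (OI.tchain_suffix h).1

theorem chain'_at {R : V → V → Prop} {l s t : List V} {a b : V}
    (h : List.Chain' R l) (he : l = s ++ a :: b :: t) : R a b := by
  subst he
  exact (List.isChain_cons_cons.mp ((List.isChain_append.mp h).2.1)).1

theorem tchain_suf_eq {T : V → V → V → Prop} {l s t : List V}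
    (h : OI.TChain T l) (he : l = s ++ t) : OI.TChain T t := by
  subst he; exact OI.tchain_suffix h

theorem tchain_pre_eq {T : V → V → V → Prop} {l s t : List V}
    (h : OI.TChain T l) (he : l = s ++ t) : OI.TChain T s := by
  subst he; exact OI.tchain_prefix h

theorem chain'_suf_eq {R : V → V → Prop} {l s t : List V}
    (h : List.Chain' R l) (he : l = s ++ t) : List.Chain' R t := by
  subst he; exact (List.isChain_append.mp h).2.1

theorem chain'_pre_eq {R : V → V → Prop} {l s t : List V}
    (h : List.Chain' R l) (he : l = s ++ t) : List.Chain' R s := by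
  subst he; exact (List.isChain_append.mp h).1

theorem getLast?_suf_eq {l s t : List V} {u : V}
    (h : l.getLast? = some u) (he : l = s ++ t) (ht : t ≠ []) : t.getLast? = some u := by
  subst he; rwa [List.getLast?_append_of_ne_nil _ ht] at h

theorem head?_pre_eq {l s t : List V} {x : V}
    (h : l.head? = some x) (he : l = s ++ t) (hs : s ≠ []) : s.head? = some x := by
  subst he; rwa [List.head?_append_of_ne_nil _ hs] at h

theorem descend :
    ∀ (t : List V) (x y : V), C.E x y →
      List.Chain' (fun a b => C.E a b ∨ C.E b a) (x :: y :: t) →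
      OI.TChain (C.toDAG.ActiveTriple Z) (x :: y :: t) →
      List.Chain' C.E (x :: y :: t) ∨ ∃ w, Relation.ReflTransGen C.E x w ∧ w ∈ Z := by
  intro t
  induction t with
  | nil =>
    intro x y hxy _ _
    exact Or.inl (by simp [List.Chain', List.isChain_cons_cons, hxy])
  | cons z t' ih =>
    intro x y hxy hc ht
    have hc2 := (List.isChain_cons_cons.mp hc).2
    rcases (List.isChain_cons_cons.mp hc2).1 with hyz | hzy
    · rcases ih y z hyz hc2 (OI.tchain_tail ht) with hch | ⟨w, hw, hwZ⟩
      · exact Or.inl (List.isChain_cons_cons.mpr ⟨hxy, hch⟩)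
      · exact Or.inr ⟨w, Relation.ReflTransGen.head hxy hw, hwZ⟩
    · have htr : C.toDAG.ActiveTriple Z x y z := ht.1
      rcases htr with ⟨_, _, w, hw, hwZ⟩ | ⟨hnc, _⟩
      · exact Or.inr ⟨w, Relation.ReflTransGen.head hxy hw, hwZ⟩
      · exact absurd ⟨hxy, hzy⟩ hnc

theorem walk_to_path (x u : V) :
    ∀ (n : ℕ) (l : List V), l.length ≤ n → l ≠ [] →
      List.Chain' (fun a b => C.E a b ∨ C.E b a) l →
      OI.TChain (C.toDAG.ActiveTriple Z) l →
      l.head? = some x → l.getLast? = some u →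
      C.toDAG.DConn Z x u := by
  intro n
  induction n with
  | zero =>
    intro l hlen hne
    have : l.length = 0 := Nat.le_zero.mp hlen
    exact absurd (List.length_eq_zero_iff.mp this) hne
  | succ n ih =>
    intro l hlen hne hc ht hh hl
    by_cases hnd : l.Nodup
    · exact ⟨l, hnd, isUPath_iff.mpr ⟨hne, hc⟩, hh, hl, activePath_iff.mpr ht⟩
    obtain ⟨l₁, v, l₂, l₃, rfl⟩ := OI.not_nodup_split hnd
    rcases List.eq_nil_or_concat l₁ with rfl | ⟨l₁', a', rfl⟩
    · -- first occurrence at the head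
      have hx : v = x := by simpa using hh
      refine ih (v :: l₃) ?_ (by simp) ?_ ?_ ?_ ?_
      · simp only [List.length_append, List.length_cons, List.length_nil] at hlen ⊢
        omega
      · exact chain'_suf_eq hc (by simp : _ = (v :: l₂) ++ (v :: l₃))
      · exact tchain_suf_eq ht (by simp : _ = (v :: l₂) ++ (v :: l₃))
      · rw [List.head?_cons, hx]
      · exact getLast?_suf_eq hl (by simp : _ = (v :: l₂) ++ (v :: l₃)) (by simp)
    simp only [List.concat_eq_append] at *
    cases l₃ with
    | nil =>
      -- second occurrence at the end
      have hu : v = u := by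
        have := getLast?_suf_eq hl
          (by simp : _ = ((l₁' ++ [a']) ++ v :: l₂) ++ [v]) (by simp)
        simpa using this
      refine ih (l₁' ++ a' :: [v]) ?_ (by simp) ?_ ?_ ?_ ?_
      · simp only [List.length_append, List.length_cons, List.length_nil] at hlen ⊢
        omega
      · exact chain'_pre_eq hc (by simp : _ = (l₁' ++ a' :: [v]) ++ (l₂ ++ [v]))
      · exact tchain_pre_eq ht (by simp : _ = (l₁' ++ a' :: [v]) ++ (l₂ ++ [v]))
      · exact head?_pre_eq hh (by simp : _ = (l₁' ++ a' :: [v]) ++ (l₂ ++ [v])) (by simp)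
      · rw [show l₁' ++ a' :: [v] = (l₁' ++ [a']) ++ [v] by simp, List.getLast?_concat, hu]
    | cons c' l₃' =>
      cases l₂ with
      | nil =>
        have hvv : C.E v v ∨ C.E v v :=
          chain'_at (R := fun a b => C.E a b ∨ C.E b a) hc (by simp : _ = (l₁' ++ [a']) ++ v :: v :: (c' :: l₃'))
        exact absurd (hvv.elim id id) (fun h => no_self_edge h)
      | cons w₁ l₂0 =>
        obtain ⟨l₂'', b₂, hsplit⟩ : ∃ L b, w₁ :: l₂0 = L ++ [b] := by
          rcases List.eq_nil_or_concat (w₁ :: l₂0) with h | ⟨L, b, h⟩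
          · simp at h
          · exact ⟨L, b, by simpa using h⟩
        have t1 : C.toDAG.ActiveTriple Z a' v w₁ :=
          tchain_at ht (by simp : _ = l₁' ++ a' :: v :: w₁ :: (l₂0 ++ v :: c' :: l₃'))
        have t2 : C.toDAG.ActiveTriple Z b₂ v c' :=
          tchain_at ht
            (by rw [show w₁ :: l₂0 = l₂'' ++ [b₂] from hsplit]; simp :
              _ = (l₁' ++ a' :: v :: l₂'') ++ b₂ :: v :: c' :: l₃')
        have e_av : C.E a' v ∨ C.E v a' :=
          chain'_at (R := fun a b => C.E a b ∨ C.E b a) hc (by simp : _ = l₁' ++ a' :: v :: (w₁ :: l₂0 ++ v :: c' :: l₃'))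
        have e_vw : C.E v w₁ ∨ C.E w₁ v :=
          chain'_at (R := fun a b => C.E a b ∨ C.E b a) hc (by simp : _ = (l₁' ++ [a']) ++ v :: w₁ :: (l₂0 ++ v :: c' :: l₃'))
        have hdesc : C.E v w₁ → (∃ w, Relation.ReflTransGen C.E v w ∧ w ∈ Z) := by
          intro hvw
          have hcs : List.Chain' (fun a b => C.E a b ∨ C.E b a)
              (v :: w₁ :: (l₂0 ++ v :: c' :: l₃')) :=
            chain'_suf_eq hc (by simp : _ = (l₁' ++ [a']) ++ v :: w₁ :: (l₂0 ++ v :: c' :: l₃'))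
          have hts : OI.TChain (C.toDAG.ActiveTriple Z) (v :: w₁ :: (l₂0 ++ v :: c' :: l₃')) :=
            tchain_suf_eq ht (by simp : _ = (l₁' ++ [a']) ++ v :: w₁ :: (l₂0 ++ v :: c' :: l₃'))
          rcases descend _ v w₁ hvw hcs hts with hch | h
          · exact absurd (OI.chain_mem_transGen hch
              (by simp : v ∈ w₁ :: (l₂0 ++ v :: c' :: l₃'))) (C.acyclic v)
          · exact h
        have seam : C.toDAG.ActiveTriple Z a' v c' := by
          by_cases hcol : C.E a' v ∧ C.E c' v
          · refine Or.inl ⟨hcol.1, hcol.2, ?_⟩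
            rcases e_vw with hvw | hwv
            · exact hdesc hvw
            · rcases t1 with ⟨_, _, hw⟩ | ⟨hnc, _⟩
              · exact hw
              · exact absurd ⟨hcol.1, hwv⟩ hnc
          · refine Or.inr ⟨hcol, ?_⟩
            intro hvZ
            have hav : C.E a' v := by
              rcases t1 with ⟨h1, _, _⟩ | ⟨_, hnz⟩
              · exact h1
              · exact absurd hvZ hnz
            have hcv : C.E c' v := by
              rcases t2 with ⟨_, h2, _⟩ | ⟨_, hnz⟩
              · exact h2
              · exact absurd hvZ hnz
            exact hcol ⟨hav, hcv⟩
        refine ih ((l₁' ++ [a']) ++ v :: c' :: l₃') ?_ (by simp) ?_ ?_ ?_ ?_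
        · simp only [List.length_append, List.length_cons, List.length_nil] at hlen ⊢
          omega
        · refine List.isChain_append.mpr ⟨?_, ?_, ?_⟩
          · exact chain'_pre_eq hc
              (by simp : _ = (l₁' ++ [a']) ++ (v :: w₁ :: l₂0 ++ v :: c' :: l₃'))
          · exact chain'_suf_eq hc
              (by simp : _ = (l₁' ++ a' :: v :: w₁ :: l₂0) ++ (v :: c' :: l₃'))
          · intro p hp q hq
            have hp' : a' = p := by simpa using hp
            have hq' : v = q := by simpa using hq
            subst hp'; subst hq'
            exact e_av
        · refine OI.tchain_glue (l₁' ++ [a']) v (c' :: l₃')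
            (tchain_pre_eq ht
              (by simp : _ = ((l₁' ++ [a']) ++ [v]) ++ (w₁ :: l₂0 ++ v :: c' :: l₃')))
            (tchain_suf_eq ht
              (by simp : _ = (l₁' ++ a' :: v :: w₁ :: l₂0) ++ (v :: c' :: l₃'))) ?_
          intro p q hp hq
          have hp' : a' = p := by simpa using hp
          have hq' : c' = q := by simpa using hq
          subst hp'; subst hq'
          exact seam
        · have h1 := head?_pre_eq hh
            (by simp : _ = (l₁' ++ [a']) ++ (v :: w₁ :: l₂0 ++ v :: c' :: l₃'))
            (by simp)
          rw [List.head?_append_of_ne_nil _ (by simp : l₁' ++ [a'] ≠ ([] : List V))]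
          exact h1
        · have h1 := getLast?_suf_eq hl
            (by simp : _ = (l₁' ++ a' :: v :: w₁ :: l₂0 ++ [v]) ++ (c' :: l₃')) (by simp)
          rw [List.getLast?_append_of_ne_nil _ (by simp : v :: c' :: l₃' ≠ ([] : List V)),
            List.getLast?_cons_cons]
          exact h1

end Splice
section Fix
variable {V : Type} {C : CID V} {X : V}

theorem eq_dropLast_concat {α} {l : List α} {b : α} (h : l.getLast? = some b) :
    l = l.dropLast ++ [b] := by
  have hne : l ≠ [] := by rintro rfl; simp at h
  have h2 := List.dropLast_append_getLast hne
  rw [List.getLast?_eq_getLast hne, Option.some.injEq] at h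
  exact (h ▸ h2).symm

theorem mem_of_getLast?' {α} {l : List α} {b : α} (h : l.getLast? = some b) : b ∈ l := by
  have hne : l ≠ [] := by rintro rfl; simp at h
  rw [List.getLast?_eq_getLast hne, Option.some.injEq] at h
  exact h ▸ List.getLast_mem hne

theorem bcnt_zero_dir : ∀ {d : List V}, List.Chain' C.E d → OI.bcnt (Bad1 C X) d = 0 := by
  intro d
  induction d with
  | nil => intro _; rfl
  | cons p d ih =>
    intro hc
    cases d with
    | nil => rfl
    | cons q d' =>
      cases d' with
      | nil => rfl
      | cons r d'' =>
        rw [OI.bcnt_cons3]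
        have h1 : C.E q r := (List.isChain_cons_cons.mp (List.isChain_cons_cons.mp hc).2).1
        rw [if_neg (fun hb => no_two_cycle h1 (hb : Bad1 C X p q r).2.1),
          ih (List.isChain_cons_cons.mp hc).2]

theorem bcnt_zero_revdir : ∀ {d : List V}, List.Chain' (fun a b => C.E b a) d →
    OI.bcnt (Bad1 C X) d = 0 := by
  intro d
  induction d with
  | nil => intro _; rfl
  | cons p d ih =>
    intro hc
    cases d with
    | nil => rfl
    | cons q d' =>
      cases d' with
      | nil => rfl
      | cons r d'' =>
        rw [OI.bcnt_cons3]
        have h1 : C.E q p := (List.isChain_cons_cons.mp hc).1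
        rw [if_neg (fun hb => no_two_cycle (hb : Bad1 C X p q r).1 h1),
          ih (List.isChain_cons_cons.mp hc).2]

theorem tchain_qt_dir : ∀ {d : List V}, List.Chain' C.E d → (∀ y ∈ d, y ∉ Zs C X) →
    OI.TChain (QT C X) d := by
  intro d
  induction d with
  | nil => intro _ _; trivial
  | cons p d ih =>
    intro hc hz
    cases d with
    | nil => trivial
    | cons q d' =>
      cases d' with
      | nil => trivial
      | cons r d'' =>
        refine ⟨qt_dir (List.isChain_cons_cons.mp hc).1
          (List.isChain_cons_cons.mp (List.isChain_cons_cons.mp hc).2).1 (hz q (by simp)), ?_⟩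
        exact ih (List.isChain_cons_cons.mp hc).2 (fun y hy => hz y (List.mem_cons_of_mem _ hy))

theorem tchain_qt_revdir : ∀ {d : List V}, List.Chain' (fun a b => C.E b a) d →
    (∀ y ∈ d, y ∉ Zs C X) → OI.TChain (QT C X) d := by
  intro d
  induction d with
  | nil => intro _ _; trivial
  | cons p d ih =>
    intro hc hz
    cases d with
    | nil => trivial
    | cons q d' =>
      cases d' with
      | nil => trivial
      | cons r d'' =>
        refine ⟨qt_out_left (List.isChain_cons_cons.mp hc).1 (hz q (by simp)), ?_⟩
        exact ih (List.isChain_cons_cons.mp hc).2 (fun y hy => hz y (List.mem_cons_of_mem _ hy))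

theorem fin_walk
    (hsep : ∀ u ∈ C.util, Relation.ReflTransGen C.E C.dec u →
      ¬ C.toDAG.DConn ({C.dec} ∪ (C.Pa \ {X})) X u)
    {l : List V} {u : V} (hb : OI.bcnt (Bad1 C X) l = 0) (hne : l ≠ [])
    (hc : List.Chain' (fun a b => C.E a b ∨ C.E b a) l)
    (ht : OI.TChain (QT C X) l) (hh : l.head? = some X) (hl : l.getLast? = some u)
    (hu : u ∈ U1s C) : False := by
  have hAT : OI.TChain (C.toDAG.ActiveTriple (Zs C X)) l := by
    refine OI.tchain_imp ?_ ht hb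
    intro a b c hq hnb
    rcases hq with ⟨h1, h2, hor⟩ | ⟨h1, h2⟩
    · rcases hor with hw | _
      · exact Or.inl ⟨h1, h2, hw⟩
      · by_cases hzd : ∃ w, Relation.ReflTransGen C.E b w ∧ w ∈ Zs C X
        · exact Or.inl ⟨h1, h2, hzd⟩
        · exact absurd ⟨h1, h2, hzd⟩ hnb
    · exact Or.inr ⟨h1, h2⟩
  exact hsep u hu.1 hu.2 (walk_to_path X u l.length l le_rfl hne hc hAT hh hl)

theorem fix_walk (hX : X ≠ C.dec)
    (hsep : ∀ u ∈ C.util, Relation.ReflTransGen C.E C.dec u →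
      ¬ C.toDAG.DConn ({C.dec} ∪ (C.Pa \ {X})) X u) :
    ∀ (n : ℕ) (l : List V) (u : V), OI.bcnt (Bad1 C X) l ≤ n → l ≠ [] →
      List.Chain' (fun a b => C.E a b ∨ C.E b a) l →
      OI.TChain (QT C X) l → l.head? = some X → l.getLast? = some u →
      u ∈ U1s C → False := by
  classical
  intro n
  induction n with
  | zero =>
    intro l u hble hne hc ht hh hl hu
    exact fin_walk hsep (Nat.le_zero.mp hble) hne hc ht hh hl hu
  | succ n ih =>
    intro l u hble hne hc ht hh hl hu
    by_cases h0 : OI.bcnt (Bad1 C X) l = 0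
    · exact fin_walk hsep h0 hne hc ht hh hl hu
    obtain ⟨s, a, b, c, t, rfl, hbad⟩ := OI.bcnt_split h0
    obtain ⟨hab, hcb, hnz⟩ := hbad
    have hqt : QT C X a b c := tchain_at ht rfl
    have hbAn : b ∈ AnS C X := by
      rcases hqt with ⟨_, _, hor⟩ | ⟨hno, _⟩
      · rcases hor with hw | hAn
        · exact absurd hw hnz
        · exact hAn
      · exact absurd ⟨hab, hcb⟩ hno
    have hbZ : b ∉ Zs C X := fun h => hnz ⟨b, Relation.ReflTransGen.refl, h⟩
    obtain ⟨α, hα, hbα⟩ := hbAn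
    obtain ⟨d, hd1, hd2, hd3, hd4⟩ := OI.rtg_to_list hbα
    have hdZ : ∀ y ∈ d, y ∉ Zs C X := fun y hy hyZ => hnz ⟨y, (hd4 y hy).1, hyZ⟩
    cases d with
    | nil => simp at hd1
    | cons b0 d' =>
    rw [List.head?_cons, Option.some.injEq] at hd1
    have hd1' : b = b0 := hd1.symm
    subst hd1'
    -- counting the original walk
    have hcount : OI.bcnt (Bad1 C X) (s ++ a :: b :: c :: t)
        = OI.bcnt (Bad1 C X) ((s ++ [a]) ++ [b]) + 1 + OI.bcnt (Bad1 C X) (b :: c :: t) := by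
      have h9 := OI.bcnt_append (bad := Bad1 C X) (s ++ [a]) b (c :: t)
      simp only [List.getLast?_concat, List.head?_cons, Option.elim_some, Option.elim_none] at h9
      rw [if_pos ⟨hab, hcb, hnz⟩] at h9
      simp only [List.append_assoc, List.cons_append, List.nil_append] at h9 ⊢
      omega
    have hαnZ : α ∉ Zs C X := hdZ α (mem_of_getLast?' hd2)
    rcases Set.mem_insert_iff.mp hα with hXα | hα'
    · -- anchor is X : reroute the head of the walk
      rw [hXα] at hd2
      refine ih (d'.reverse ++ b :: c :: t) u ?_ (by simp) ?_ ?_ ?_ ?_ hu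
      · -- count
        have h9 := OI.bcnt_append (bad := Bad1 C X) d'.reverse b (c :: t)
        have hz1 : OI.bcnt (Bad1 C X) (d'.reverse ++ [b]) = 0 := by
          have hrc : List.Chain' (fun a b => C.E b a) ((b :: d').reverse) :=
            List.isChain_reverse.mpr hd3
          rw [List.reverse_cons] at hrc
          exact bcnt_zero_revdir hrc
        have hz2 : (d'.reverse.getLast?.elim 0 fun x =>
            (c :: t).head?.elim 0 fun y => if Bad1 C X x b y then 1 else 0) = 0 := by
          cases hop : d'.reverse.getLast? with
          | none => rfl
          | some p =>
            have hp : d'.head? = some p := by rw [← List.getLast?_reverse]; exact hop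
            have hbp : C.E b p := by
              cases d' with
              | nil => simp at hp
              | cons y d'' =>
                rw [List.head?_cons, Option.some.injEq] at hp
                exact hp ▸ (List.isChain_cons_cons.mp hd3).1
            simp only [List.head?_cons, Option.elim_some, Option.elim_none]
            rw [if_neg (fun hb2 => no_two_cycle (hb2 : Bad1 C X p b c).1 hbp)]
        rw [h9, hz1, hz2]
        omega
      · -- chain
        refine List.isChain_append.mpr ⟨?_, ?_, ?_⟩
        · refine List.isChain_reverse.mpr ?_
          have := (List.isChain_cons.mp hd3).2
          exact this.imp (fun _ _ h => Or.inr h)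
        · exact chain'_suf_eq hc (by simp : _ = (s ++ [a]) ++ (b :: c :: t))
        · intro p hp y hy
          rw [Option.mem_def, List.getLast?_reverse] at hp
          rw [Option.mem_def, List.head?_cons, Option.some.injEq] at hy
          subst hy
          have hbp : C.E b p := by
            cases d' with
            | nil => simp at hp
            | cons y0 d'' =>
              rw [List.head?_cons, Option.some.injEq] at hp
              exact hp ▸ (List.isChain_cons_cons.mp hd3).1
          exact Or.inr hbp
      · -- tchain
        refine OI.tchain_glue d'.reverse b (c :: t) ?_
          (tchain_suf_eq ht (by simp : _ = (s ++ [a]) ++ (b :: c :: t))) ?_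
        · have hrc : List.Chain' (fun a b => C.E b a) ((b :: d').reverse) :=
            List.isChain_reverse.mpr hd3
          have hqt2 : OI.TChain (QT C X) ((b :: d').reverse) :=
            tchain_qt_revdir hrc (fun y hy => hdZ y (List.mem_reverse.mp hy))
          rw [List.reverse_cons] at hqt2
          exact hqt2
        · intro p q hp hq
          rw [List.getLast?_reverse] at hp
          rw [List.head?_cons, Option.some.injEq] at hq
          subst hq
          have hbp : C.E b p := by
            cases d' with
            | nil => simp at hp
            | cons y0 d'' =>
              rw [List.head?_cons, Option.some.injEq] at hp
              exact hp ▸ (List.isChain_cons_cons.mp hd3).1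
          exact qt_out_left hbp hbZ
      · -- head
        cases d' with
        | nil => simpa using hd2
        | cons y d'' =>
          rw [List.head?_append_of_ne_nil _ (by simp), List.head?_reverse]
          rw [List.getLast?_cons_cons] at hd2
          exact hd2
      · -- last
        rw [List.getLast?_append_of_ne_nil _ (by simp : b :: c :: t ≠ ([] : List V))]
        exact getLast?_suf_eq hl (by simp : _ = (s ++ [a]) ++ (b :: c :: t)) (by simp)
    rcases hα' with hαZ | hαU
    · exact absurd hαZ hαnZ
    · -- anchor is a downstream utility node : reroute the tail of the walk
      refine ih ((s ++ [a]) ++ b :: d') α ?_ (by simp) ?_ ?_ ?_ ?_ hαU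
      · -- count
        have h9 := OI.bcnt_append (bad := Bad1 C X) (s ++ [a]) b d'
        have hz1 : OI.bcnt (Bad1 C X) (b :: d') = 0 := bcnt_zero_dir hd3
        have hz2 : ((s ++ [a]).getLast?.elim 0 fun x =>
            d'.head?.elim 0 fun y => if Bad1 C X x b y then 1 else 0) = 0 := by
          cases hop : d'.head? with
          | none => simp [List.getLast?_concat]
          | some y0 =>
            have hby : C.E b y0 := by
              cases d' with
              | nil => simp at hop
              | cons y1 d'' =>
                rw [List.head?_cons, Option.some.injEq] at hop
                exact hop ▸ (List.isChain_cons_cons.mp hd3).1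
            simp only [List.getLast?_concat, Option.elim_some, Option.elim_none]
            rw [if_neg (fun hb2 => no_two_cycle hby (hb2 : Bad1 C X a b y0).2.1)]
        rw [h9, hz1, hz2]
        have := hble
        rw [hcount] at this
        omega
      · -- chain
        refine List.isChain_append.mpr ⟨?_, hd3.imp (fun _ _ h => Or.inl h), ?_⟩
        · exact chain'_pre_eq hc (by simp : _ = (s ++ [a]) ++ (b :: c :: t))
        · intro p hp y hy
          rw [Option.mem_def, List.getLast?_concat, Option.some.injEq] at hp
          rw [Option.mem_def, List.head?_cons, Option.some.injEq] at hy
          subst hp; subst hy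
          exact Or.inl hab
      · -- tchain
        refine OI.tchain_glue (s ++ [a]) b d'
          (tchain_pre_eq ht (by simp : _ = ((s ++ [a]) ++ [b]) ++ (c :: t)))
          (tchain_qt_dir hd3 hdZ) ?_
        intro p q hp hq
        rw [List.getLast?_concat, Option.some.injEq] at hp
        subst hp
        have hbq : C.E b q := by
          cases d' with
          | nil => simp at hq
          | cons y1 d'' =>
            rw [List.head?_cons, Option.some.injEq] at hq
            exact hq ▸ (List.isChain_cons_cons.mp hd3).1
        exact qt_out_right hbq hbZ
      · -- head
        have h1 := head?_pre_eq hh (by simp : _ = (s ++ [a]) ++ (b :: c :: t)) (by simp)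
        rw [List.head?_append_of_ne_nil _ (by simp : s ++ [a] ≠ ([] : List V))]
        exact h1
      · -- last
        rw [List.getLast?_append_of_ne_nil _ (by simp : b :: d' ≠ ([] : List V))]
        exact hd2

end Fix
section Main
variable {V : Type} {C : CID V} {X : V}

theorem madj_mk {u w : V} (h1 : u ∈ AnS C X ∧ u ∉ Zs C X)
    (h2 : w ∈ AnS C X ∧ w ∉ Zs C X)
    (h3 : C.E u w ∨ C.E w u ∨ ∃ c ∈ AnS C X, C.E u c ∧ C.E w c) : Madj C X u w :=
  ⟨h1, h2, h3⟩

theorem rs_walk (hX : X ≠ C.dec) {w : V} (hw : w ∈ Rs C X) :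
    ∃ l : List V, l ≠ [] ∧ List.Chain' (fun a b => C.E a b ∨ C.E b a) l ∧
      OI.TChain (QT C X) l ∧ l.head? = some X ∧ l.getLast? = some w := by
  induction hw with
  | refl => exact ⟨[X], by simp, List.isChain_singleton X, trivial, rfl, rfl⟩
  | @tail b c hXb hbc ih =>
    obtain ⟨l, hne, hc, ht, hh, hl⟩ := ih
    have hbAnZ : b ∈ AnS C X ∧ b ∉ Zs C X := hbc.1
    have hcAnZ : c ∈ AnS C X ∧ c ∉ Zs C X := hbc.2.1
    have hldec : l = l.dropLast ++ [b] := eq_dropLast_concat hl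
    rcases hbc.2.2 with he | he | ⟨m, hmAn, hbm, hcm⟩
    · -- direct edge b → c (or c → b)
      refine ⟨l ++ [c], by simp, ?_, ?_, ?_, List.getLast?_concat⟩
      · exact List.isChain_append.mpr ⟨hc, List.isChain_singleton c,
          fun p hp y hy => by
            rw [Option.mem_def, hl, Option.some.injEq] at hp
            rw [Option.mem_def, List.head?_cons, Option.some.injEq] at hy
            subst hp; subst hy; exact Or.inl he⟩
      · have hg := OI.tchain_glue l.dropLast b [c]
          (hldec ▸ ht) trivial
          (fun p q hp hq => by
            rw [List.head?_cons, Option.some.injEq] at hq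
            subst hq
            exact qt_of_mid hbAnZ.1 hbAnZ.2)
        have h5 : l.dropLast ++ b :: [c] = l ++ [c] := by
          conv_rhs => rw [hldec]
          simp
        exact h5 ▸ hg
      · rw [List.head?_append_of_ne_nil _ hne]; exact hh
    · -- direct edge c → b
      refine ⟨l ++ [c], by simp, ?_, ?_, ?_, List.getLast?_concat⟩
      · exact List.isChain_append.mpr ⟨hc, List.isChain_singleton c,
          fun p hp y hy => by
            rw [Option.mem_def, hl, Option.some.injEq] at hp
            rw [Option.mem_def, List.head?_cons, Option.some.injEq] at hy
            subst hp; subst hy; exact Or.inr he⟩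
      · have hg := OI.tchain_glue l.dropLast b [c]
          (hldec ▸ ht) trivial
          (fun p q hp hq => by
            rw [List.head?_cons, Option.some.injEq] at hq
            subst hq
            exact qt_of_mid hbAnZ.1 hbAnZ.2)
        have h5 : l.dropLast ++ b :: [c] = l ++ [c] := by
          conv_rhs => rw [hldec]
          simp
        exact h5 ▸ hg
      · rw [List.head?_append_of_ne_nil _ hne]; exact hh
    · -- marriage through a common child m
      refine ⟨l ++ [m, c], by simp, ?_, ?_, ?_, ?_⟩
      · refine List.isChain_append.mpr ⟨hc, ?_, ?_⟩
        · exact List.isChain_pair.mpr (Or.inr hcm)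
        · intro p hp y hy
          rw [Option.mem_def, hl, Option.some.injEq] at hp
          rw [Option.mem_def, List.head?_cons, Option.some.injEq] at hy
          subst hp; subst hy
          exact Or.inl hbm
      · have hg := OI.tchain_glue l.dropLast b [m, c]
          (hldec ▸ ht)
          (⟨Or.inl ⟨hbm, hcm, Or.inr hmAn⟩, trivial⟩ : OI.TChain (QT C X) [b, m, c])
          (fun p q hp hq => by
            rw [List.head?_cons, Option.some.injEq] at hq
            subst hq
            exact qt_of_mid hbAnZ.1 hbAnZ.2)
        have h5 : l.dropLast ++ b :: [m, c] = l ++ [m, c] := by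
          conv_rhs => rw [hldec]
          simp
        exact h5 ▸ hg
      · rw [List.head?_append_of_ne_nil _ hne]; exact hh
      · rw [show l ++ [m, c] = (l ++ [m]) ++ [c] by simp, List.getLast?_concat]

theorem main_lemma (hX : X ≠ C.dec)
    (hsep : ∀ u ∈ C.util, Relation.ReflTransGen C.E C.dec u →
      ¬ C.toDAG.DConn ({C.dec} ∪ (C.Pa \ {X})) X u)
    {w u : V} (hw : w ∈ Rs C X) (hu : u ∈ U1s C)
    (hwu : Relation.ReflTransGen C.E w u)
    (havoid : ∀ z, Relation.ReflTransGen C.E w z → Relation.ReflTransGen C.E z u →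
      z ∉ Zs C X) : False := by
  classical
  obtain ⟨l, hne, hc, ht, hh, hl⟩ := rs_walk hX hw
  obtain ⟨d, hd1, hd2, hd3, hd4⟩ := OI.rtg_to_list hwu
  cases d with
  | nil => simp at hd1
  | cons w0 d' =>
  rw [List.head?_cons, Option.some.injEq] at hd1
  have hd1' : w = w0 := hd1.symm
  subst hd1'
  have hdZ : ∀ y ∈ w :: d', y ∉ Zs C X := fun y hy => havoid y (hd4 y hy).1 (hd4 y hy).2
  have hldec : l = l.dropLast ++ [w] := eq_dropLast_concat hl
  have hwZ : w ∉ Zs C X := hdZ w (by simp)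
  have hg := OI.tchain_glue l.dropLast w d' (hldec ▸ ht) (tchain_qt_dir hd3 hdZ)
    (fun p q hp hq => by
      have hwq : C.E w q := by
        cases d' with
        | nil => simp at hq
        | cons y d'' =>
          rw [List.head?_cons, Option.some.injEq] at hq
          exact hq ▸ (List.isChain_cons_cons.mp hd3).1
      exact qt_out_right hwq hwZ)
  have h5 : l.dropLast ++ w :: d' = l ++ d' := by
    conv_rhs => rw [hldec]
    simp
  rw [h5] at hg
  refine fix_walk hX hsep (OI.bcnt (Bad1 C X) (l ++ d')) (l ++ d') u le_rfl ?_ ?_ hg ?_ ?_ hu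
  · intro h9
    exact hne (List.append_eq_nil_iff.mp h9).1
  · refine List.isChain_append.mpr ⟨hc, ?_, ?_⟩
    · exact ((List.isChain_cons.mp hd3).2).imp (fun _ _ h => Or.inl h)
    · intro p hp q hq
      rw [Option.mem_def, hl, Option.some.injEq] at hp
      subst hp
      have hwq : C.E w q := by
        cases d' with
        | nil => simp at hq
        | cons y d'' =>
          rw [Option.mem_def, List.head?_cons, Option.some.injEq] at hq
          exact hq ▸ (List.isChain_cons_cons.mp hd3).1
      exact Or.inl hwq
  · rw [List.head?_append_of_ne_nil _ hne]; exact hh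
  · cases d' with
    | nil =>
      have hwu2 : w = u := by simpa using hd2
      rw [List.append_nil, hl, hwu2]
    | cons y d'' =>
      rw [List.getLast?_append_of_ne_nil _ (by simp)]
      rw [List.getLast?_cons_cons] at hd2
      exact hd2

theorem u1_not_rs (hX : X ≠ C.dec)
    (hsep : ∀ u ∈ C.util, Relation.ReflTransGen C.E C.dec u →
      ¬ C.toDAG.DConn ({C.dec} ∪ (C.Pa \ {X})) X u)
    {u : V} (hu : u ∈ U1s C) : u ∉ Rs C X := by
  intro huR
  have hunZ : u ∉ Zs C X := (rs_sub hX huR).2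
  refine main_lemma hX hsep huR hu Relation.ReflTransGen.refl ?_
  intro z h1 h2 hz
  rcases hz with hz1 | hz1
  · have hzd : z = C.dec := hz1
    subst hzd
    have hne2 : u ≠ C.dec := fun h => hunZ (h ▸ (Or.inl rfl : C.dec ∈ Zs C X))
    have htg : Relation.TransGen C.E C.dec u := by
      rcases Relation.reflTransGen_iff_eq_or_transGen.mp hu.2 with h | h
      · exact absurd h hne2
      · exact h
    exact C.acyclic C.dec (htg.trans_left h1)
  · exact C.acyclic C.dec (Relation.TransGen.tail' (hu.2.trans h1) hz1.1)

theorem no_dec_child_rs (hX : X ≠ C.dec)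
    (hXdesc : ¬ Relation.TransGen C.E C.dec X)
    (hsep : ∀ u ∈ C.util, Relation.ReflTransGen C.E C.dec u →
      ¬ C.toDAG.DConn ({C.dec} ∪ (C.Pa \ {X})) X u)
    {c : V} (hdc : C.E C.dec c) : c ∉ Rs C X := by
  intro hcR
  obtain ⟨α, hα, hcα⟩ := (rs_sub hX hcR).1
  rcases Set.mem_insert_iff.mp hα with hXα | hα'
  · exact hXdesc (hXα ▸ Relation.TransGen.head' hdc hcα)
  rcases hα' with hz1 | hαU
  · rcases hz1 with h1 | h1
    · have hzd : α = C.dec := h1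
      exact C.acyclic C.dec (Relation.TransGen.head' hdc (hzd ▸ hcα))
    · exact C.acyclic C.dec (Relation.TransGen.tail'
        (Relation.ReflTransGen.head hdc hcα) h1.1)
  · refine main_lemma hX hsep hcR hαU hcα ?_
    intro z h1 h2 hz
    rcases hz with hz1 | hz1
    · have hzd : z = C.dec := hz1
      exact C.acyclic C.dec (Relation.TransGen.head' hdc (hzd ▸ h1))
    · exact C.acyclic C.dec (Relation.TransGen.tail'
        (Relation.ReflTransGen.head hdc h1) hz1.1)

end Main
section Alg
variable {V : Type} [Fintype V] [DecidableEq V] {val : V → Type} [∀ v, Fintype (val v)]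

/-- `f` does not depend on coordinate `v`. -/
def Indep (v : V) (f : (∀ u : V, val u) → ℝ) : Prop :=
  ∀ (a : ∀ u : V, val u) (x : val v), f (Function.update a v x) = f a

/-- `f` depends only on the coordinates in `S`. -/
def Dep (S : Set V) (f : (∀ u : V, val u) → ℝ) : Prop :=
  ∀ a b : (∀ u : V, val u), (∀ v ∈ S, a v = b v) → f a = f b

theorem Dep.mono {S T : Set V} {f : (∀ u : V, val u) → ℝ} (hST : S ⊆ T) (h : Dep S f) :
    Dep T f :=
  fun a b hab => h a b (fun v hv => hab v (hST hv))

theorem Dep.indep {S : Set V} {f : (∀ u : V, val u) → ℝ} (h : Dep S f) {v : V}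
    (hv : v ∉ S) : Indep v f := by
  intro a x
  refine h _ _ fun u hu => ?_
  have huv : u ≠ v := by rintro rfl; exact hv hu
  exact Function.update_of_ne huv _ _

/-- Summing out one coordinate. -/
noncomputable def sOut (v : V) (f : (∀ u : V, val u) → ℝ) : (∀ u : V, val u) → ℝ :=
  fun a => ∑ x : val v, f (Function.update a v x)

theorem sOut_mul {v : V} {g f : (∀ u : V, val u) → ℝ} (hg : Indep v g)
    (a : ∀ u : V, val u) :
    sOut v (fun b => g b * f b) a = g a * sOut v f a := by
  show ∑ x : val v, g (Function.update a v x) * f (Function.update a v x)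
    = g a * ∑ x : val v, f (Function.update a v x)
  rw [Finset.mul_sum]
  exact Finset.sum_congr rfl fun x _ => by rw [hg a x]

theorem dep_sOut {S : Set V} {f : (∀ u : V, val u) → ℝ} (h : Dep S f) (v : V) :
    Dep (S \ {v}) (sOut v f) := by
  intro a b hab
  unfold sOut
  refine Finset.sum_congr rfl fun x _ => ?_
  refine h _ _ fun u hu => ?_
  by_cases huv : u = v
  · subst huv; simp
  · rw [Function.update_of_ne huv, Function.update_of_ne huv]
    exact hab u ⟨hu, huv⟩

theorem sum_sOut (v : V) (f : (∀ u : V, val u) → ℝ) :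
    ∑ a, sOut v f a = (Fintype.card (val v) : ℝ) * ∑ a, f a := by
  classical
  set e := (Equiv.piSplitAt v val).symm with he
  have key : ∀ (p : val v × ∀ j : {j // j ≠ v}, val j) (x : val v),
      Function.update (e p) v x = e (x, p.2) := by
    intro p x
    funext j
    by_cases hj : j = v
    · subst hj; simp [he, Equiv.piSplitAt_symm_apply]
    · simp [he, Function.update_of_ne hj, Equiv.piSplitAt_symm_apply, hj]
  rw [← Equiv.sum_comp e (sOut v f), ← Equiv.sum_comp e f]
  rw [Fintype.sum_prod_type, Fintype.sum_prod_type]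
  calc ∑ y : val v, ∑ r, sOut v f (e (y, r))
      = ∑ _y : val v, ∑ r, ∑ x : val v, f (e (x, r)) := by
        refine Finset.sum_congr rfl fun y _ => Finset.sum_congr rfl fun r _ => ?_
        unfold sOut
        exact Finset.sum_congr rfl fun x _ => by rw [key (y, r) x]
    _ = (Fintype.card (val v) : ℝ) * ∑ r, ∑ x : val v, f (e (x, r)) := by
        rw [Finset.sum_const, nsmul_eq_mul, Finset.card_univ]
    _ = (Fintype.card (val v) : ℝ) * ∑ y : val v, ∑ r, f (e (y, r)) := by
        rw [Finset.sum_comm]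

/-- Summing out a list of coordinates. -/
noncomputable def sumOutL (l : List V) (f : (∀ u : V, val u) → ℝ) :
    (∀ u : V, val u) → ℝ :=
  l.foldr sOut f

theorem sumOutL_cons {v : V} {l : List V} {f : (∀ u : V, val u) → ℝ} :
    sumOutL (v :: l) f = sOut v (sumOutL l f) := rfl

theorem dep_sumOutL {S : Set V} {f : (∀ u : V, val u) → ℝ} (h : Dep S f) :
    ∀ l : List V, Dep (S \ {x | x ∈ l}) (sumOutL l f) := by
  intro l
  induction l with
  | nil => exact h.mono (fun x hx => ⟨hx, by simp⟩)
  | cons v l ih =>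
    refine (dep_sOut ih v).mono (fun x hx => ?_)
    exact ⟨hx.1.1, fun hm => (List.mem_cons.mp hm).elim (fun h9 => hx.2 h9)
      (fun h9 => hx.1.2 h9)⟩

theorem sum_mul_sumOutL (l : List V) (g f : (∀ u : V, val u) → ℝ)
    (hg : ∀ v ∈ l, Indep v g) :
    ∑ a, g a * sumOutL l f a
      = (l.map fun v => (Fintype.card (val v) : ℝ)).prod * ∑ a, g a * f a := by
  induction l with
  | nil => simp [sumOutL]
  | cons v l ih =>
    have h1 : ∀ a, g a * sumOutL (v :: l) f a
        = sOut v (fun b => g b * sumOutL l f b) a :=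
      fun a => (sOut_mul (hg v (by simp)) a).symm
    rw [Finset.sum_congr rfl (fun a _ => h1 a), sum_sOut,
      ih (fun u hu => hg u (by simp [hu])), List.map_cons, List.prod_cons, mul_assoc]

theorem exists_min_rel {r : V → V → Prop} (hir : ∀ z, ¬ r z z)
    (htr : ∀ {a b c : V}, r a b → r b c → r a c) (T : Finset V) (hT : T.Nonempty) :
    ∃ v ∈ T, ∀ w ∈ T, ¬ r w v := by
  classical
  obtain ⟨n, hn⟩ : ∃ n, T.card ≤ n := ⟨T.card, le_rfl⟩
  induction n generalizing T with
  | zero =>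
    obtain ⟨v0, hv0⟩ := hT
    have := Finset.card_pos.mpr ⟨v0, hv0⟩
    omega
  | succ n ih =>
    obtain ⟨v0, hv0⟩ := hT
    by_cases hgood : ∀ w ∈ T, ¬ r w v0
    · exact ⟨v0, hv0, hgood⟩
    · push_neg at hgood
      obtain ⟨w, hwT, hw⟩ := hgood
      have hSsub : T.filter (fun z => r z v0) ⊆ T := Finset.filter_subset _ _
      have hSne : (T.filter (fun z => r z v0)).Nonempty :=
        ⟨w, Finset.mem_filter.mpr ⟨hwT, hw⟩⟩
      have hv0S : v0 ∉ T.filter (fun z => r z v0) :=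
        fun h => hir v0 (Finset.mem_filter.mp h).2
      have hcard : (T.filter (fun z => r z v0)).card < T.card :=
        Finset.card_lt_card ((Finset.ssubset_iff_of_subset hSsub).mpr ⟨v0, hv0, hv0S⟩)
      obtain ⟨v, hvS, hvmin⟩ := ih _ hSne (by omega)
      refine ⟨v, hSsub hvS, fun z hzT hzv => ?_⟩
      exact hvmin z (Finset.mem_filter.mpr ⟨hzT, htr hzv (Finset.mem_filter.mp hvS).2⟩) hzv

variable {C : CID V}

theorem indep_cpt (P : C.Param val) {u w : V} (hu : u ≠ C.dec) (hne : w ≠ u)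
    (hpar : ¬ C.E w u) : Indep w (P.cpt u) := by
  intro a x
  refine P.cpt_local u hu _ _ ?_ ?_
  · exact Function.update_of_ne (Ne.symm hne) _ _
  · intro z hz
    have hzw : z ≠ w := by rintro rfl; exact hpar hz
    exact Function.update_of_ne hzw _ _

theorem indep_mul {w : V} {f g : (∀ u : V, val u) → ℝ} (hf : Indep w f)
    (hg : Indep w g) : Indep w (fun a => f a * g a) :=
  fun a x => by simp only [hf a x, hg a x]

theorem indep_prod {w : V} {s : Finset V} {F : V → (∀ u : V, val u) → ℝ}
    (h : ∀ u ∈ s, Indep w (F u)) : Indep w (fun a => ∏ u ∈ s, F u a) :=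
  fun a x => Finset.prod_congr rfl (fun u hu => h u hu a x)

theorem indep_util_sum {w : V} {s : Finset V} (P : C.Param val)
    (h : ∀ u ∈ s, u ≠ w) : Indep w (fun a => ∑ u ∈ s, P.uval u (a u)) := by
  intro a x
  exact Finset.sum_congr rfl fun u hu => by rw [Function.update_of_ne (h u hu)]

theorem engine (P : C.Param val) (p : (∀ u : V, val u) → ℝ)
    (hp : ∀ a, ∑ d : val C.dec, p (Function.update a C.dec d) = 1)
    (h : (∀ u : V, val u) → ℝ) :
    ∀ T : Finset V,
      (∀ v ∈ T, ∀ u, C.E v u → u ∈ T) →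
      (∀ v ∈ T, v ≠ C.dec → Indep v p) →
      (∀ v ∈ T, Indep v h) →
      ∑ a, (if C.dec ∈ T then 1 else p a) *
          ((∏ v ∈ (Finset.univ \ T).erase C.dec, P.cpt v a) * h a)
        = (∏ v ∈ T, (Fintype.card (val v) : ℝ)) *
          ∑ a, p a * ((∏ v ∈ Finset.univ.erase C.dec, P.cpt v a) * h a) := by
  intro T
  induction T using Finset.strongInduction with
  | _ T ihT =>
    intro hdown hpT hhT
    rcases T.eq_empty_or_nonempty with rfl | hTne
    · simp
    obtain ⟨v, hvT, hvmin⟩ := exists_min_rel (r := Relation.TransGen C.E)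
      (fun z => C.acyclic z) (fun hab hbc => hab.trans hbc) T hTne
    have hT'ss : T.erase v ⊂ T := Finset.erase_ssubset hvT
    have hdown' : ∀ w ∈ T.erase v, ∀ u, C.E w u → u ∈ T.erase v := by
      intro w hw u hE
      have hwT := (Finset.mem_erase.mp hw).2
      refine Finset.mem_erase.mpr ⟨?_, hdown w hwT u hE⟩
      rintro rfl
      exact hvmin w hwT (Relation.TransGen.single hE)
    have ih := ihT (T.erase v) hT'ss hdown'
      (fun w hw => hpT w (Finset.mem_erase.mp hw).2)
      (fun w hw => hhT w (Finset.mem_erase.mp hw).2)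
    have hprodT : (∏ w ∈ T, (Fintype.card (val w) : ℝ))
        = (Fintype.card (val v) : ℝ) * ∏ w ∈ T.erase v, (Fintype.card (val w) : ℝ) :=
      (Finset.mul_prod_erase T _ hvT).symm
    have hApar : ∀ u ∈ (Finset.univ \ T).erase C.dec, ¬ C.E v u := by
      intro u hu hE
      have := hdown v hvT u hE
      have hu2 := Finset.mem_sdiff.mp (Finset.mem_erase.mp hu).2
      exact hu2.2 this
    have hAnotv : v ∉ (Finset.univ \ T).erase C.dec := by
      intro hv
      exact (Finset.mem_sdiff.mp (Finset.mem_erase.mp hv).2).2 hvT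
    by_cases hvdec : v = C.dec
    · -- summing out the decision itself
      subst hvdec
      have hdecT' : C.dec ∉ T.erase C.dec := Finset.notMem_erase _ _
      have hAeq : (Finset.univ \ T.erase C.dec).erase C.dec = (Finset.univ \ T).erase C.dec := by
        ext u
        constructor
        · intro hu
          obtain ⟨hud, hsd⟩ := Finset.mem_erase.mp hu
          have huT' : u ∉ T.erase C.dec := (Finset.mem_sdiff.mp hsd).2
          refine Finset.mem_erase.mpr ⟨hud, Finset.mem_sdiff.mpr ⟨Finset.mem_univ _, ?_⟩⟩
          exact fun huT => huT' (Finset.mem_erase.mpr ⟨hud, huT⟩)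
        · intro hu
          obtain ⟨hud, hsd⟩ := Finset.mem_erase.mp hu
          have huT : u ∉ T := (Finset.mem_sdiff.mp hsd).2
          refine Finset.mem_erase.mpr ⟨hud, Finset.mem_sdiff.mpr ⟨Finset.mem_univ _, ?_⟩⟩
          exact fun huT' => huT (Finset.mem_erase.mp huT').2
      have hG : Indep C.dec (fun a => (∏ w ∈ (Finset.univ \ T).erase C.dec, P.cpt w a) * h a) := by
        refine indep_mul (indep_prod fun u hu => ?_) (hhT C.dec hvT)
        refine indep_cpt P (Finset.mem_erase.mp hu).1 ?_ (hApar u hu)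
        intro hvu
        exact hAnotv (hvu ▸ hu)
      have hfun : ∀ a, (if C.dec ∈ T.erase C.dec then 1 else p a) *
          ((∏ w ∈ (Finset.univ \ T.erase C.dec).erase C.dec, P.cpt w a) * h a)
          = (fun b => ((∏ w ∈ (Finset.univ \ T).erase C.dec, P.cpt w b) * h b) * p b) a := by
        intro a
        rw [if_neg hdecT', hAeq]
        ring
      calc ∑ a, (if C.dec ∈ T then 1 else p a) *
            ((∏ w ∈ (Finset.univ \ T).erase C.dec, P.cpt w a) * h a)
          = ∑ a, sOut C.dec (fun b => ((∏ w ∈ (Finset.univ \ T).erase C.dec, P.cpt w b) * h b) * p b) a := by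
            refine Finset.sum_congr rfl fun a _ => ?_
            have hsum : sOut C.dec p a = 1 := hp a
            rw [if_pos hvT, sOut_mul hG, hsum, mul_one, one_mul]
        _ = (Fintype.card (val C.dec) : ℝ) *
            ∑ a, ((∏ w ∈ (Finset.univ \ T).erase C.dec, P.cpt w a) * h a) * p a := sum_sOut _ _
        _ = (Fintype.card (val C.dec) : ℝ) *
            ∑ a, (if C.dec ∈ T.erase C.dec then 1 else p a) *
              ((∏ w ∈ (Finset.univ \ T.erase C.dec).erase C.dec, P.cpt w a) * h a) := by
            rw [Finset.sum_congr rfl fun a _ => hfun a]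
        _ = (∏ w ∈ T, (Fintype.card (val w) : ℝ)) *
            ∑ a, p a * ((∏ w ∈ Finset.univ.erase C.dec, P.cpt w a) * h a) := by
            rw [ih, hprodT, mul_assoc]
    · -- summing out an ordinary chance node
      have hdec_iff : C.dec ∈ T.erase v ↔ C.dec ∈ T :=
        ⟨fun hh => (Finset.mem_erase.mp hh).2,
         fun hh => Finset.mem_erase.mpr ⟨fun he => hvdec he.symm, hh⟩⟩
      have hA' : (Finset.univ \ T.erase v).erase C.dec
          = insert v ((Finset.univ \ T).erase C.dec) := by
        ext u
        constructor
        · intro hu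
          obtain ⟨hud, hsd⟩ := Finset.mem_erase.mp hu
          have huT' : u ∉ T.erase v := (Finset.mem_sdiff.mp hsd).2
          by_cases huv : u = v
          · exact Finset.mem_insert.mpr (Or.inl huv)
          · exact Finset.mem_insert.mpr (Or.inr (Finset.mem_erase.mpr ⟨hud,
              Finset.mem_sdiff.mpr ⟨Finset.mem_univ _,
                fun huT => huT' (Finset.mem_erase.mpr ⟨huv, huT⟩)⟩⟩))
        · intro hu
          rcases Finset.mem_insert.mp hu with rfl | hu2
          · exact Finset.mem_erase.mpr ⟨hvdec, Finset.mem_sdiff.mpr ⟨Finset.mem_univ _,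
              fun hc => (Finset.mem_erase.mp hc).1 rfl⟩⟩
          · obtain ⟨hud, hsd⟩ := Finset.mem_erase.mp hu2
            have huT : u ∉ T := (Finset.mem_sdiff.mp hsd).2
            exact Finset.mem_erase.mpr ⟨hud, Finset.mem_sdiff.mpr ⟨Finset.mem_univ _,
              fun hc => huT (Finset.mem_erase.mp hc).2⟩⟩
      have hpterm : Indep v (fun a => if C.dec ∈ T then 1 else p a) := by
        by_cases hd : C.dec ∈ T
        · intro a x; simp only [if_pos hd]
        · simp only [if_neg hd]
          exact hpT v hvT hvdec
      have hG : Indep v (fun a => (if C.dec ∈ T then 1 else p a) *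
          ((∏ w ∈ (Finset.univ \ T).erase C.dec, P.cpt w a) * h a)) := by
        refine indep_mul hpterm (indep_mul (indep_prod fun u hu => ?_) (hhT v hvT))
        refine indep_cpt P (Finset.mem_erase.mp hu).1 ?_ (hApar u hu)
        intro hvu
        exact hAnotv (hvu ▸ hu)
      have hfun : ∀ a, (if C.dec ∈ T.erase v then 1 else p a) *
          ((∏ w ∈ (Finset.univ \ T.erase v).erase C.dec, P.cpt w a) * h a)
          = (fun b => ((if C.dec ∈ T then 1 else p b) *
              ((∏ w ∈ (Finset.univ \ T).erase C.dec, P.cpt w b) * h b)) * P.cpt v b) a := by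
        intro a
        rw [hA', Finset.prod_insert hAnotv, if_congr hdec_iff rfl rfl]
        ring
      have hsum1 : ∀ a, sOut v (P.cpt v) a = 1 := fun a => P.cpt_sum v hvdec a
      calc ∑ a, (if C.dec ∈ T then 1 else p a) *
            ((∏ w ∈ (Finset.univ \ T).erase C.dec, P.cpt w a) * h a)
          = ∑ a, sOut v (fun b => ((if C.dec ∈ T then 1 else p b) *
              ((∏ w ∈ (Finset.univ \ T).erase C.dec, P.cpt w b) * h b)) * P.cpt v b) a := by
            refine Finset.sum_congr rfl fun a _ => ?_
            rw [sOut_mul hG, hsum1 a, mul_one]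
        _ = (Fintype.card (val v) : ℝ) *
            ∑ a, ((if C.dec ∈ T then 1 else p a) *
              ((∏ w ∈ (Finset.univ \ T).erase C.dec, P.cpt w a) * h a)) * P.cpt v a :=
            sum_sOut _ _
        _ = (Fintype.card (val v) : ℝ) *
            ∑ a, (if C.dec ∈ T.erase v then 1 else p a) *
              ((∏ w ∈ (Finset.univ \ T.erase v).erase C.dec, P.cpt w a) * h a) := by
            rw [Finset.sum_congr rfl fun a _ => (hfun a).symm]
        _ = (∏ w ∈ T, (Fintype.card (val w) : ℝ)) *
            ∑ a, p a * ((∏ w ∈ Finset.univ.erase C.dec, P.cpt w a) * h a) := by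
            rw [ih, hprodT, mul_assoc]

end Alg
section Greedy
variable {V : Type} [Fintype V] [DecidableEq V] {val : V → Type} [∀ v, Fintype (val v)]

theorem greedy (C : CID V) (hne : ∀ v, Nonempty (val v)) (X : V)
    (β FA : (∀ u : V, val u) → ℝ) (hFA : ∀ a, 0 ≤ FA a) (hFAdec : Indep C.dec FA)
    (hβ : Dep ({C.dec} ∪ (C.Pa \ {X})) β) :
    ∃ q : C.Pol val (C.Pa \ {X}),
      ∀ p : (∀ u : V, val u) → ℝ, (∀ a, 0 ≤ p a) →
        (∀ a, ∑ d : val C.dec, p (Function.update a C.dec d) = 1) →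
        ∑ a, p a * (FA a * β a) ≤ ∑ a, q.p a * (FA a * β a) := by
  classical
  haveI : ∀ v, Nonempty (val v) := hne
  have hpick : ∀ f : val C.dec → ℝ, ∃ d, ∀ d', f d' ≤ f d := fun f => by
    obtain ⟨d, _, hd⟩ := Finset.exists_max_image Finset.univ f Finset.univ_nonempty
    exact ⟨d, fun d' => hd d' (Finset.mem_univ _)⟩
  set pick : (val C.dec → ℝ) → val C.dec := fun f => (hpick f).choose with hpickdef
  have hpickmax : ∀ (f : val C.dec → ℝ) (d' : val C.dec), f d' ≤ f (pick f) :=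
    fun f => (hpick f).choose_spec
  set dstar : (∀ u : V, val u) → val C.dec :=
    fun a => pick (fun d => β (Function.update a C.dec d)) with hdstardef
  have hdstar_eq : ∀ a b : (∀ u : V, val u), (∀ v ∈ C.Pa \ {X}, a v = b v) →
      dstar a = dstar b := by
    intro a b hab
    have hfe : (fun d => β (Function.update a C.dec d))
        = (fun d => β (Function.update b C.dec d)) := by
      funext d
      refine hβ _ _ fun v hv => ?_
      rcases hv with hv | hv
      · have hv2 : v = C.dec := hv
        subst hv2; simp
      · have hvdec : v ≠ C.dec := by
          rintro rfl
          exact no_self_edge (hv.1 : C.E C.dec C.dec)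
        rw [Function.update_of_ne hvdec, Function.update_of_ne hvdec]
        exact hab v hv
    show pick (fun d => β (Function.update a C.dec d))
      = pick (fun d => β (Function.update b C.dec d))
    rw [hfe]
  have hdstar_upd : ∀ (a : ∀ u : V, val u) (d : val C.dec),
      dstar (Function.update a C.dec d) = dstar a := by
    intro a d
    have hfe : (fun d' => β (Function.update (Function.update a C.dec d) C.dec d'))
        = (fun d' => β (Function.update a C.dec d')) := by
      funext d'
      rw [Function.update_idem]
    show pick (fun d' => β (Function.update (Function.update a C.dec d) C.dec d'))
      = pick (fun d' => β (Function.update a C.dec d'))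
    rw [hfe]
  have hdmax : ∀ (a : ∀ u : V, val u) (d : val C.dec),
      β (Function.update a C.dec d) ≤ β (Function.update a C.dec (dstar a)) :=
    fun a d => hpickmax (fun d' => β (Function.update a C.dec d')) d
  refine ⟨⟨fun a => if a C.dec = dstar a then 1 else 0, ?_, ?_, ?_⟩, ?_⟩
  · intro a
    by_cases h : a C.dec = dstar a <;> simp [h]
  · intro a b hdec hobs
    show (if a C.dec = dstar a then (1:ℝ) else 0) = (if b C.dec = dstar b then (1:ℝ) else 0)
    rw [hdec, hdstar_eq a b hobs]
  · intro a
    show (∑ d : val C.dec, if (Function.update a C.dec d) C.dec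
        = dstar (Function.update a C.dec d) then (1:ℝ) else 0) = 1
    calc ∑ d : val C.dec, (if (Function.update a C.dec d) C.dec
          = dstar (Function.update a C.dec d) then (1:ℝ) else 0)
        = ∑ d : val C.dec, (if d = dstar a then (1:ℝ) else 0) := by
          refine Finset.sum_congr rfl fun d _ => ?_
          rw [Function.update_self, hdstar_upd a d]
      _ = 1 := by
          rw [Finset.sum_ite_eq' Finset.univ (dstar a) (fun _ => (1:ℝ))]
          simp
  · intro p hp0 hp1
    have hptw : ∀ a, sOut C.dec (fun b => p b * (FA b * β b)) a
        ≤ sOut C.dec (fun b => (if b C.dec = dstar b then 1 else 0) * (FA b * β b)) a := by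
      intro a
      have hL : sOut C.dec (fun b => p b * (FA b * β b)) a
          = FA a * ∑ d : val C.dec,
              p (Function.update a C.dec d) * β (Function.update a C.dec d) := by
        show (∑ d : val C.dec, p (Function.update a C.dec d) *
            (FA (Function.update a C.dec d) * β (Function.update a C.dec d)))
          = FA a * ∑ d : val C.dec,
              p (Function.update a C.dec d) * β (Function.update a C.dec d)
        rw [Finset.mul_sum]
        refine Finset.sum_congr rfl fun d _ => ?_
        rw [hFAdec a d]
        ring
      have hR : sOut C.dec (fun b => (if b C.dec = dstar b then 1 else 0) * (FA b * β b)) a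
          = FA a * β (Function.update a C.dec (dstar a)) := by
        show (∑ d : val C.dec,
            (if (Function.update a C.dec d) C.dec = dstar (Function.update a C.dec d)
              then (1:ℝ) else 0) *
            (FA (Function.update a C.dec d) * β (Function.update a C.dec d)))
          = FA a * β (Function.update a C.dec (dstar a))
        have h2 : ∀ d : val C.dec,
            (if (Function.update a C.dec d) C.dec = dstar (Function.update a C.dec d)
              then (1:ℝ) else 0) *
              (FA (Function.update a C.dec d) * β (Function.update a C.dec d))
            = if d = dstar a
              then FA (Function.update a C.dec d) * β (Function.update a C.dec d) else 0 := by
          intro d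
          rw [Function.update_self, hdstar_upd a d]
          split <;> simp
        rw [Finset.sum_congr rfl fun d _ => h2 d,
          Finset.sum_ite_eq' Finset.univ (dstar a)
            (fun d => FA (Function.update a C.dec d) * β (Function.update a C.dec d))]
        simp [hFAdec a (dstar a)]
      rw [hL, hR]
      refine mul_le_mul_of_nonneg_left ?_ (hFA a)
      calc ∑ d : val C.dec, p (Function.update a C.dec d) * β (Function.update a C.dec d)
          ≤ ∑ d : val C.dec,
              p (Function.update a C.dec d) * β (Function.update a C.dec (dstar a)) := by
            refine Finset.sum_le_sum fun d _ => ?_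
            exact mul_le_mul_of_nonneg_left (hdmax a d) (hp0 _)
        _ = β (Function.update a C.dec (dstar a)) := by
            rw [← Finset.sum_mul, hp1 a, one_mul]
    have hsum := Finset.sum_le_sum (fun a (_ : a ∈ Finset.univ) => hptw a)
    rw [sum_sOut, sum_sOut] at hsum
    have hcard : (0:ℝ) < Fintype.card (val C.dec) := by
      exact_mod_cast Fintype.card_pos
    exact le_of_mul_le_mul_left hsum hcard

end Greedy
/-- Observation incentive criterion, soundness direction: if a node `X` not descending
from the decision `D` is d-separated from every utility node descending from `D` by
`{D} ∪ Pa_D \ {X}`, then for every parameterization there is an optimal policy not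
depending on `X`: a policy depending only on `Pa_D \ {X}` whose value is at least that of
every policy depending on `Pa_D ∪ {X}`. Hence the optimal value with the information link
`X → D` equals the optimal value without it (no observation incentive for `X`). -/
theorem stmt4 {V : Type} [Fintype V] [DecidableEq V] (C : CID V) (X : V)
    (hXdesc : ¬ Relation.TransGen C.E C.dec X)
    (hsep : ∀ u ∈ C.util, Relation.ReflTransGen C.E C.dec u →
      ¬ C.toDAG.DConn ({C.dec} ∪ (C.Pa \ {X})) X u)
    (val : V → Type) [∀ v, Fintype (val v)] (P : C.Param val) :
    ∃ π : C.Pol val (C.Pa \ {X}),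
      ∀ π' : C.Pol val (C.Pa ∪ {X}), C.value P π'.p ≤ C.value P π.p := by
  classical
  -- trivial case : some domain is empty
  by_cases hemp : ∀ v, Nonempty (val v)
  swap
  · push_neg at hemp
    obtain ⟨v0, hv0⟩ := hemp
    haveI hE : IsEmpty (∀ u : V, val u) := ⟨fun a => hv0.false (a v0)⟩
    have h0 : ∀ f : (∀ u : V, val u) → ℝ, C.value P f = 0 := by
      intro f
      unfold CID.value
      rw [Finset.univ_eq_empty, Finset.sum_empty]
    refine ⟨⟨fun _ => 0, fun _ => le_refl 0, fun _ _ _ _ => rfl,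
      fun a => (hE.false a).elim⟩, ?_⟩
    intro π'
    rw [h0, h0]
  -- a policy ignores coordinates outside its observations and the decision
  have hpol_indep : ∀ (Obs : Set V) (π : C.Pol val Obs) (v : V),
      v ≠ C.dec → v ∉ Obs → Indep v π.p := by
    intro Obs π v hv1 hv2 a x
    refine π.depends _ _ (Function.update_of_ne (Ne.symm hv1) _ _) ?_
    intro u hu
    have huv : u ≠ v := by rintro rfl; exact hv2 hu
    exact Function.update_of_ne huv _ _
  have hcard_pos : ∀ v, (0:ℝ) < (Fintype.card (val v) : ℝ) := by
    intro v
    haveI := hemp v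
    exact_mod_cast Fintype.card_pos
  by_cases hXd : X = C.dec
  · -- degenerate case : X is the decision itself
    subst hXd
    set f0 : (∀ u : V, val u) → ℝ :=
      fun a => (∏ v ∈ Finset.univ.erase C.dec, P.cpt v a) *
        ∑ u ∈ C.util, P.uval u (a u) with hf0
    set Wl : List V :=
      (Finset.univ.filter (fun v => ¬(v = C.dec ∨ v ∈ C.Pa))).toList with hWl
    have hWmem : ∀ v ∈ Wl, ¬(v = C.dec ∨ v ∈ C.Pa) := by
      intro v hv
      rw [hWl, Finset.mem_toList, Finset.mem_filter] at hv
      exact hv.2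
    set β0 := sumOutL Wl f0 with hβ0
    have hdepβ0 : Dep ({C.dec} ∪ (C.Pa \ {C.dec})) β0 := by
      have hdU : Dep Set.univ f0 := by
        intro a b hab
        have : a = b := funext fun v => hab v (Set.mem_univ v)
        rw [this]
      refine (dep_sumOutL hdU Wl).mono ?_
      intro v hv
      by_cases hd : v = C.dec
      · exact Or.inl hd
      · by_cases hPa : v ∈ C.Pa
        · exact Or.inr ⟨hPa, fun h => hd h⟩
        · exfalso
          refine hv.2 ?_
          rw [hWl]
          simp only [Set.mem_setOf_eq, Finset.mem_toList, Finset.mem_filter]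
          exact ⟨Finset.mem_univ v, fun h => h.elim hd hPa⟩
    obtain ⟨q, hq⟩ := greedy C hemp C.dec β0 (fun _ => (1:ℝ))
      (fun _ => zero_le_one) (fun a x => rfl) hdepβ0
    refine ⟨q, ?_⟩
    intro π'
    have hval : ∀ f : (∀ u : V, val u) → ℝ, C.value P f = ∑ a, f a * f0 a := by
      intro f
      unfold CID.value
      exact Finset.sum_congr rfl fun a _ => by rw [hf0]; ring
    have hind : ∀ (g : (∀ u : V, val u) → ℝ),
        (∀ v, v ≠ C.dec → v ∉ C.Pa → Indep v g) → ∀ v ∈ Wl, Indep v g := by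
      intro g hg v hv
      have h2 := hWmem v hv
      push_neg at h2
      exact hg v h2.1 h2.2
    have hi1 : ∀ v ∈ Wl, Indep v π'.p := by
      refine hind _ (fun v h1 h2 => hpol_indep _ π' v h1 ?_)
      intro hu
      rcases hu with hu | hu
      · exact h2 hu
      · exact h1 hu
    have hi2 : ∀ v ∈ Wl, Indep v q.p := by
      refine hind _ (fun v h1 h2 => hpol_indep _ q v h1 ?_)
      intro hu
      exact h2 hu.1
    have hK1 := sum_mul_sumOutL Wl π'.p f0 hi1
    have hK2 := sum_mul_sumOutL Wl q.p f0 hi2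
    have hqle := hq π'.p π'.nonneg π'.sum
    simp only [one_mul] at hqle
    rw [hval, hval]
    have hKpos : (0:ℝ) < (Wl.map fun v => (Fintype.card (val v) : ℝ)).prod := by
      refine List.prod_pos ?_
      intro x hx
      rw [List.mem_map] at hx
      obtain ⟨v, _, rfl⟩ := hx
      exact hcard_pos v
    rw [← hβ0] at hK1 hK2
    have : (Wl.map fun v => (Fintype.card (val v) : ℝ)).prod * ∑ a, π'.p a * f0 a
        ≤ (Wl.map fun v => (Fintype.card (val v) : ℝ)).prod * ∑ a, q.p a * f0 a := by
      rw [← hK1, ← hK2]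
      exact hqle
    exact le_of_mul_le_mul_left this hKpos

  · -- main case : X ≠ dec
    have hZdec : C.dec ∈ Zs C X := Or.inl rfl
    have hXAn : X ∈ AnS C X := ⟨X, Set.mem_insert _ _, Relation.ReflTransGen.refl⟩
    have hdecAn : C.dec ∈ AnS C X :=
      ⟨C.dec, Set.mem_insert_iff.mpr (Or.inr (Or.inl hZdec)), Relation.ReflTransGen.refl⟩
    have hXRs : X ∈ Rs C X := Relation.ReflTransGen.refl
    have hPaAn : ∀ v ∈ C.Pa, v ∈ AnS C X := by
      intro v hv
      exact ⟨C.dec, Set.mem_insert_iff.mpr (Or.inr (Or.inl hZdec)),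
        Relation.ReflTransGen.single hv⟩
    set AnF : Finset V := Finset.univ.filter (fun v => v ∈ AnS C X) with hAnF
    set OutF : Finset V := Finset.univ \ AnF with hOutF
    set DesF : Finset V := Finset.univ.filter
      (fun v => Relation.ReflTransGen C.E C.dec v) with hDesF
    set Φ : Finset V := (AnF.erase C.dec).filter
      (fun v => v ∈ Rs C X ∨ ∃ w, C.E w v ∧ w ∈ Rs C X) with hPhiD
    set Ψ : Finset V := (AnF.erase C.dec) \ Φ with hPsiD
    set BcF : Finset V := AnF.filter (fun v => v ∉ Zs C X ∧ v ∉ Rs C X) with hBcD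
    set U0 : (∀ u : V, val u) → ℝ := fun a =>
      ∑ u ∈ C.util.filter (fun u => ¬ Relation.ReflTransGen C.E C.dec u),
        P.uval u (a u) with hU0
    set U1 : (∀ u : V, val u) → ℝ := fun a =>
      ∑ u ∈ C.util.filter (fun u => Relation.ReflTransGen C.E C.dec u),
        P.uval u (a u) with hU1
    set FA : (∀ u : V, val u) → ℝ := fun a => ∏ v ∈ Φ, P.cpt v a with hFAD
    set FB : (∀ u : V, val u) → ℝ := fun a => ∏ v ∈ Ψ, P.cpt v a with hFBD
    set β : (∀ u : V, val u) → ℝ := sumOutL BcF.toList (fun a => FB a * U1 a) with hβd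
    have hmemAnF : ∀ v, v ∈ AnF ↔ v ∈ AnS C X := by
      intro v
      rw [hAnF, Finset.mem_filter]
      exact ⟨fun h => h.2, fun h => ⟨Finset.mem_univ v, h⟩⟩
    have hmemΦ : ∀ v ∈ Φ, v ∈ AnS C X ∧ v ≠ C.dec ∧
        (v ∈ Rs C X ∨ ∃ w, C.E w v ∧ w ∈ Rs C X) := by
      intro v hv
      rw [hPhiD, Finset.mem_filter, Finset.mem_erase] at hv
      exact ⟨(hmemAnF v).mp hv.1.2, hv.1.1, hv.2⟩
    have hmemΨ : ∀ v ∈ Ψ, v ∈ AnS C X ∧ v ≠ C.dec ∧ v ∉ Rs C X ∧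
        (∀ w, C.E w v → w ∉ Rs C X) := by
      intro v hv
      rw [hPsiD, Finset.mem_sdiff, Finset.mem_erase] at hv
      have hvAn := (hmemAnF v).mp hv.1.2
      have hnot : ¬(v ∈ Rs C X ∨ ∃ w, C.E w v ∧ w ∈ Rs C X) := by
        intro h
        refine hv.2 ?_
        rw [hPhiD]
        exact Finset.mem_filter.mpr
          ⟨Finset.mem_erase.mpr ⟨hv.1.1, (hmemAnF v).mpr hvAn⟩, h⟩
      push_neg at hnot
      exact ⟨hvAn, hv.1.1, hnot.1, fun w hw hwR => hnot.2 w hw hwR⟩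
    have hmemBc : ∀ v, v ∈ BcF ↔ v ∈ AnS C X ∧ v ∉ Zs C X ∧ v ∉ Rs C X := by
      intro v
      rw [hBcD, Finset.mem_filter]
      constructor
      · rintro ⟨h1, h2, h3⟩; exact ⟨(hmemAnF v).mp h1, h2, h3⟩
      · rintro ⟨h1, h2, h3⟩; exact ⟨(hmemAnF v).mpr h1, h2, h3⟩
    have hPhiRs : ∀ v ∈ Φ, v ∉ Zs C X → v ∈ Rs C X := by
      intro v hv hvZ
      obtain ⟨hvAn, hvne, hcond⟩ := hmemΦ v hv
      rcases hcond with h | ⟨w, hwv, hwR⟩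
      · exact h
      · exact Relation.ReflTransGen.tail hwR (madj_mk (rs_sub hXd hwR) ⟨hvAn, hvZ⟩ (Or.inl hwv))
    have hPhi_dec : ∀ v ∈ Φ, ¬ C.E C.dec v := by
      intro v hv hE
      obtain ⟨hvAn, hvne, hcond⟩ := hmemΦ v hv
      have hvZ : v ∉ Zs C X := by
        intro hz
        rcases hz with h | h
        · exact hvne h
        · exact no_two_cycle (h.1 : C.E v C.dec) hE
      exact no_dec_child_rs hXd hXdesc hsep hE (hPhiRs v hv hvZ)
    have hBc_props : ∀ v ∈ BcF.toList, v ≠ C.dec ∧ v ∉ C.Pa ∧ v ≠ X := by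
      intro v hv
      rw [Finset.mem_toList] at hv
      obtain ⟨hvAn, hvZ, hvR⟩ := (hmemBc v).mp hv
      refine ⟨?_, ?_, ?_⟩
      · rintro rfl; exact hvZ (Or.inl rfl)
      · intro hPa
        by_cases hvX : v = X
        · exact hvR (hvX ▸ hXRs)
        · exact hvZ (Or.inr ⟨hPa, hvX⟩)
      · rintro rfl; exact hvR hXRs
    have hBcFA : ∀ v ∈ BcF.toList, Indep v FA := by
      intro v hv
      rw [Finset.mem_toList] at hv
      obtain ⟨hvAn, hvZ, hvR⟩ := (hmemBc v).mp hv
      rw [hFAD]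
      refine indep_prod fun u hu => ?_
      obtain ⟨huAn, hune, hcond⟩ := hmemΦ u hu
      have hvu : v ≠ u := by
        rintro rfl
        exact hvR (hPhiRs v hu hvZ)
      refine indep_cpt P hune hvu ?_
      intro hE
      rcases hcond with huR | ⟨w, hwu, hwR⟩
      · exact hvR (Relation.ReflTransGen.tail huR
          (madj_mk (rs_sub hXd huR) ⟨hvAn, hvZ⟩ (Or.inr (Or.inl hE))))
      · exact hvR (Relation.ReflTransGen.tail hwR
          (madj_mk (rs_sub hXd hwR) ⟨hvAn, hvZ⟩ (Or.inr (Or.inr ⟨u, huAn, hwu, hE⟩))))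
    have hdepFBU1 : Dep (Zs C X ∪ {v | v ∈ AnS C X ∧ v ∉ Zs C X ∧ v ∉ Rs C X})
        (fun a => FB a * U1 a) := by
      intro a b hab
      show FB a * U1 a = FB b * U1 b
      have hmemS : ∀ z, z ∈ AnS C X → z ∉ Rs C X →
          z ∈ Zs C X ∪ {v | v ∈ AnS C X ∧ v ∉ Zs C X ∧ v ∉ Rs C X} := by
        intro z hz1 hz2
        by_cases hz3 : z ∈ Zs C X
        · exact Or.inl hz3
        · exact Or.inr ⟨hz1, hz3, hz2⟩
      have hFBe : FB a = FB b := by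
        rw [hFBD]
        refine Finset.prod_congr rfl fun v hv => ?_
        obtain ⟨hvAn, hvne, hvR, hvpar⟩ := hmemΨ v hv
        refine P.cpt_local v hvne a b (hab v (hmemS v hvAn hvR)) ?_
        intro w hw
        exact hab w (hmemS w (anS_parent hvAn hw) (hvpar w hw))
      have hU1e : U1 a = U1 b := by
        rw [hU1]
        refine Finset.sum_congr rfl fun u hu => ?_
        rw [Finset.mem_filter] at hu
        have huU1 : u ∈ U1s C := ⟨hu.1, hu.2⟩
        have huAn : u ∈ AnS C X :=
          ⟨u, Set.mem_insert_iff.mpr (Or.inr (Or.inr huU1)), Relation.ReflTransGen.refl⟩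
        have huR : u ∉ Rs C X := u1_not_rs hXd hsep huU1
        rw [hab u (hmemS u huAn huR)]
      rw [hFBe, hU1e]
    have hβdep : Dep ({C.dec} ∪ (C.Pa \ {X})) β := by
      rw [hβd]
      refine (dep_sumOutL hdepFBU1 BcF.toList).mono ?_
      intro v hv
      obtain ⟨hv1, hv2⟩ := hv
      rcases hv1 with h | h
      · exact h
      · exfalso
        refine hv2 ?_
        show v ∈ BcF.toList
        rw [Finset.mem_toList]
        exact (hmemBc v).mpr h
    have hFAnn : ∀ a, 0 ≤ FA a := by
      intro a
      rw [hFAD]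
      exact Finset.prod_nonneg fun v _ => P.cpt_nonneg v a
    have hFAdec : Indep C.dec FA := by
      rw [hFAD]
      refine indep_prod fun u hu => ?_
      obtain ⟨_, hune, _⟩ := hmemΦ u hu
      exact indep_cpt P hune (fun h => hune h.symm) (hPhi_dec u hu)
    obtain ⟨q, hq⟩ := greedy C hemp X β FA hFAnn hFAdec hβdep
    refine ⟨q, ?_⟩
    intro π'
    -- independence facts for the two policies
    have hπind : ∀ v, v ≠ C.dec → v ∉ C.Pa → v ≠ X → Indep v π'.p := by
      intro v h1 h2 h3
      refine hpol_indep _ π' v h1 ?_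
      intro hu
      rcases hu with hu | hu
      · exact h2 hu
      · exact h3 hu
    have hqind : ∀ v, v ≠ C.dec → v ∉ C.Pa → v ≠ X → Indep v q.p := by
      intro v h1 h2 h3
      exact hpol_indep _ q v h1 (fun hu => h2 hu.1)
    -- engine on the descendants of the decision : U0 part is policy independent
    have hengine0 : ∀ p : (∀ u : V, val u) → ℝ,
        (∀ a, ∑ d : val C.dec, p (Function.update a C.dec d) = 1) →
        (∀ v, v ≠ C.dec → v ∉ C.Pa → v ≠ X → Indep v p) →
        ∑ a, (if C.dec ∈ DesF then 1 else p a) *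
            ((∏ v ∈ (Finset.univ \ DesF).erase C.dec, P.cpt v a) * U0 a)
          = (∏ v ∈ DesF, (Fintype.card (val v) : ℝ)) *
            ∑ a, p a * ((∏ v ∈ Finset.univ.erase C.dec, P.cpt v a) * U0 a) := by
      intro p hp1 hpind
      refine engine P p hp1 U0 DesF ?_ ?_ ?_
      · intro v hv u hE
        rw [hDesF, Finset.mem_filter] at hv ⊢
        exact ⟨Finset.mem_univ u, hv.2.tail hE⟩
      · intro v hv hvne
        rw [hDesF, Finset.mem_filter] at hv
        have htg : Relation.TransGen C.E C.dec v := by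
          rcases Relation.reflTransGen_iff_eq_or_transGen.mp hv.2 with h | h
          · exact absurd h hvne
          · exact h
        refine hpind v hvne ?_ ?_
        · intro hPa
          exact C.acyclic C.dec (htg.tail (hPa : C.E v C.dec))
        · rintro rfl
          exact hXdesc htg
      · intro v hv
        rw [hDesF, Finset.mem_filter] at hv
        rw [hU0]
        refine indep_util_sum P fun u hu => ?_
        rw [Finset.mem_filter] at hu
        rintro rfl
        exact hu.2 hv.2
    have hdecDes : C.dec ∈ DesF := by
      rw [hDesF]
      exact Finset.mem_filter.mpr ⟨Finset.mem_univ _, Relation.ReflTransGen.refl⟩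
    have hDpos : (0:ℝ) < ∏ v ∈ DesF, (Fintype.card (val v) : ℝ) :=
      Finset.prod_pos fun v _ => hcard_pos v
    have h0eq : ∑ a, π'.p a * ((∏ v ∈ Finset.univ.erase C.dec, P.cpt v a) * U0 a)
        = ∑ a, q.p a * ((∏ v ∈ Finset.univ.erase C.dec, P.cpt v a) * U0 a) := by
      have e1 := hengine0 π'.p π'.sum hπind
      have e2 := hengine0 q.p q.sum hqind
      simp only [if_pos hdecDes] at e1 e2
      exact mul_left_cancel₀ (ne_of_gt hDpos) (e1.symm.trans e2)
    -- engine on the non-ancestral part : U1 reduces to the ancestral set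
    have hAnFc : Finset.univ \ OutF = AnF := by
      rw [hOutF, Finset.sdiff_sdiff_self_left, Finset.univ_inter]
    have hdecOut : C.dec ∉ OutF := by
      intro h
      rw [hOutF, Finset.mem_sdiff] at h
      exact h.2 ((hmemAnF C.dec).mpr hdecAn)
    have hengine1 : ∀ p : (∀ u : V, val u) → ℝ,
        (∀ a, ∑ d : val C.dec, p (Function.update a C.dec d) = 1) →
        (∀ v, v ≠ C.dec → v ∉ C.Pa → v ≠ X → Indep v p) →
        ∑ a, p a * ((∏ v ∈ AnF.erase C.dec, P.cpt v a) * U1 a)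
          = (∏ v ∈ OutF, (Fintype.card (val v) : ℝ)) *
            ∑ a, p a * ((∏ v ∈ Finset.univ.erase C.dec, P.cpt v a) * U1 a) := by
      intro p hp1 hpind
      have hOmem : ∀ v ∈ OutF, v ∉ AnS C X := by
        intro v hv
        rw [hOutF, Finset.mem_sdiff] at hv
        exact fun h => hv.2 ((hmemAnF v).mpr h)
      have he := engine P p hp1 U1 OutF ?_ ?_ ?_
      · simp only [if_neg hdecOut] at he
        rw [hAnFc] at he
        exact he
      · intro v hv u hE
        have hvAn := hOmem v hv
        rw [hOutF, Finset.mem_sdiff]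
        refine ⟨Finset.mem_univ u, fun huAn => ?_⟩
        exact hvAn (anS_parent ((hmemAnF u).mp huAn) hE)
      · intro v hv hvne
        have hvAn := hOmem v hv
        refine hpind v hvne (fun hPa => hvAn (hPaAn v hPa)) (fun hX9 => hvAn (hX9 ▸ hXAn))
      · intro v hv
        have hvAn := hOmem v hv
        rw [hU1]
        refine indep_util_sum P fun u hu => ?_
        rw [Finset.mem_filter] at hu
        rintro rfl
        exact hvAn ⟨u, Set.mem_insert_iff.mpr (Or.inr (Or.inr ⟨hu.1, hu.2⟩)),
          Relation.ReflTransGen.refl⟩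
    have hsplitAB : ∀ a, (∏ v ∈ AnF.erase C.dec, P.cpt v a) = FB a * FA a := by
      intro a
      rw [hFAD, hFBD, hPsiD]
      exact (Finset.prod_sdiff (by rw [hPhiD]; exact Finset.filter_subset _ _)).symm
    have hBpos : (0:ℝ) < (BcF.toList.map fun v => (Fintype.card (val v) : ℝ)).prod := by
      refine List.prod_pos ?_
      intro x hx
      rw [List.mem_map] at hx
      obtain ⟨v, _, rfl⟩ := hx
      exact hcard_pos v
    have hOpos : (0:ℝ) < ∏ v ∈ OutF, (Fintype.card (val v) : ℝ) :=
      Finset.prod_pos fun v _ => hcard_pos v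
    have hconv : ∀ p : (∀ u : V, val u) → ℝ,
        (∀ a, ∑ d : val C.dec, p (Function.update a C.dec d) = 1) →
        (∀ v, v ≠ C.dec → v ∉ C.Pa → v ≠ X → Indep v p) →
        ∑ a, p a * (FA a * β a)
          = (BcF.toList.map fun v => (Fintype.card (val v) : ℝ)).prod *
            ((∏ v ∈ OutF, (Fintype.card (val v) : ℝ)) *
              ∑ a, p a * ((∏ v ∈ Finset.univ.erase C.dec, P.cpt v a) * U1 a)) := by
      intro p hp1 hpind
      have hpi : ∀ v ∈ BcF.toList, Indep v p := by
        intro v hv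
        obtain ⟨h1, h2, h3⟩ := hBc_props v hv
        exact hpind v h1 h2 h3
      have h1 : ∑ a, p a * (FA a * β a) = ∑ a, (p a * FA a) * β a :=
        Finset.sum_congr rfl fun a _ => by ring
      have hpeel := sum_mul_sumOutL BcF.toList (fun a => p a * FA a)
        (fun a => FB a * U1 a) (fun v hv => indep_mul (hpi v hv) (hBcFA v hv))
      rw [h1, hβd, hpeel]
      congr 1
      have h2 : ∀ a, (p a * FA a) * (FB a * U1 a)
          = p a * ((∏ v ∈ AnF.erase C.dec, P.cpt v a) * U1 a) := by
        intro a
        rw [hsplitAB a]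
        ring
      rw [Finset.sum_congr rfl (fun a _ => h2 a), hengine1 p hp1 hpind]
    -- value decomposition
    have hUsplit : ∀ a : ∀ u : V, val u,
        (∑ u ∈ C.util, P.uval u (a u)) = U1 a + U0 a := by
      intro a
      rw [hU1, hU0]
      exact (Finset.sum_filter_add_sum_filter_not C.util _ _).symm
    have hval : ∀ f : (∀ u : V, val u) → ℝ, C.value P f
        = (∑ a, f a * ((∏ v ∈ Finset.univ.erase C.dec, P.cpt v a) * U1 a))
          + ∑ a, f a * ((∏ v ∈ Finset.univ.erase C.dec, P.cpt v a) * U0 a) := by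
      intro f
      unfold CID.value
      rw [← Finset.sum_add_distrib]
      refine Finset.sum_congr rfl fun a _ => ?_
      rw [hUsplit a]
      ring
    rw [hval π'.p, hval q.p]
    refine add_le_add ?_ (le_of_eq h0eq)
    have hqle := hq π'.p π'.nonneg π'.sum
    rw [hconv π'.p π'.sum hπind, hconv q.p q.sum hqind] at hqle
    exact le_of_mul_le_mul_left (le_of_mul_le_mul_left hqle hBpos) hOpos
end

section
/- If two nodes X and Y are d-separated given Z in a DAG, then in every Bayesian network parameterization of the DAG, X and Y are conditionally independent given Z. -/
/-- A Bayesian network over the DAG `G`: finite domains `val v` and conditional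
probability tables for each node, depending only on the node's own value and its parents. -/
structure BN (V : Type) [Fintype V] [DecidableEq V] (G : DAG V)
    (val : V → Type) [∀ v, Fintype (val v)] where
  cpt : ∀ _v : V, (∀ u : V, val u) → ℝ
  cpt_nonneg : ∀ v a, 0 ≤ cpt v a
  cpt_local : ∀ v a b, a v = b v → (∀ u, G.E u v → a u = b u) → cpt v a = cpt v b
  cpt_sum : ∀ (v : V) (a : ∀ u : V, val u), ∑ x : val v, cpt v (Function.update a v x) = 1

namespace BN

variable {V : Type} [Fintype V] [DecidableEq V] {G : DAG V} {val : V → Type}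
  [∀ v, Fintype (val v)]

/-- The joint probability of a full assignment: the product of the conditionals. -/
noncomputable def joint (B : BN V G val) (a : ∀ v, val v) : ℝ :=
  ∏ v, B.cpt v a

open Classical in
/-- The probability of an event (a predicate on full assignments). -/
noncomputable def pr (B : BN V G val) (φ : (∀ v, val v) → Prop) : ℝ :=
  ∑ a : ∀ v, val v, if φ a then B.joint a else 0

end BN
namespace DSepAux

open Relation List

variable {V : Type} {G : DAG V} {Z : Set V}

lemma no_self {a : V} (h : G.E a a) : False :=
  G.acyclic a (Relation.TransGen.single h)

lemma no2 {a b : V} (h : G.E a b) (h' : G.E b a) : False :=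
  G.acyclic a (Relation.TransGen.head h (Relation.TransGen.single h'))

lemma triple_symm {a b c : V} (h : G.ActiveTriple Z a b c) : G.ActiveTriple Z c b a := by
  rcases h with ⟨h1, h2, h3⟩ | ⟨h1, h2⟩
  · exact Or.inl ⟨h2, h1, h3⟩
  · exact Or.inr ⟨fun hh => h1 ⟨hh.2, hh.1⟩, h2⟩

lemma active_tail {x : V} {p : List V} (h : G.ActivePath Z (x::p)) : G.ActivePath Z p := by
  match p with
  | [] => trivial
  | [y] => trivial
  | y::w::l => exact h.2

lemma upath_tail {x : V} {p : List V} (h : G.IsUPath (x::p)) (hp : p ≠ []) : G.IsUPath p := by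
  match p with
  | [] => exact absurd rfl hp
  | y::l => exact h.2

lemma active_append_right : ∀ (l : List V) {r}, G.ActivePath Z (l ++ r) → G.ActivePath Z r
  | [], _, h => h
  | x::l, r, h => active_append_right l (active_tail h)

lemma upath_append_right : ∀ (l : List V) {r}, G.IsUPath (l ++ r) → r ≠ [] → G.IsUPath r
  | [], _, h, _ => h
  | x::l, r, h, hr =>
      upath_append_right l (upath_tail h (by simp [hr])) hr

lemma active_append_left : ∀ (l : List V) {r}, G.ActivePath Z (l ++ r) → G.ActivePath Z l
  | [], _, _ => trivial
  | [_], _, _ => trivial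
  | [_, _], _, _ => trivial
  | x::y::w::l, r, h => ⟨h.1, active_append_left (y::w::l) h.2⟩

lemma upath_append_left : ∀ (l : List V) {r}, G.IsUPath (l ++ r) → l ≠ [] → G.IsUPath l
  | [], _, _, hne => absurd rfl hne
  | [x], _, _, _ => trivial
  | x::y::l, r, h, _ => ⟨h.1, upath_append_left (y::l) h.2 (by simp)⟩

lemma upath_glue : ∀ (l : List V) {v r}, G.IsUPath (l ++ [v]) → G.IsUPath (v :: r) →
    G.IsUPath (l ++ v :: r)
  | [], v, r, _, h2 => h2
  | [x], v, r, h1, h2 => ⟨h1.1, h2⟩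
  | x::y::l, v, r, h1, h2 => ⟨h1.1, upath_glue (y::l) h1.2 h2⟩

lemma active_glue : ∀ (l : List V) {v r}, G.ActivePath Z (l ++ [v]) → G.ActivePath Z (v :: r) →
    (∀ b c, l.getLast? = some b → r.head? = some c → G.ActiveTriple Z b v c) →
    G.ActivePath Z (l ++ v :: r)
  | [], v, r, _, h2, _ => h2
  | [b], v, r, h1, h2, hj => by
      cases r with
      | nil => trivial
      | cons c r => exact ⟨hj b c rfl rfl, h2⟩
  | [a, b], v, r, h1, h2, hj => by
      cases r with
      | nil => exact h1
      | cons c r' => exact ⟨h1.1, hj b c rfl rfl, h2⟩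
  | x::y::w::l, v, r, h1, h2, hj =>
      ⟨h1.1, active_glue (y::w::l) h1.2 h2
        (fun b c hb hc => hj b c (by rw [List.getLast?_cons_cons]; exact hb) hc)⟩

lemma upath_snoc : ∀ (l : List V) {x : V}, G.IsUPath l →
    (∀ b, l.getLast? = some b → (G.E b x ∨ G.E x b)) → G.IsUPath (l ++ [x])
  | [], _, h, _ => absurd h (by simp [DAG.IsUPath])
  | [b], x, _, he => ⟨he b rfl, trivial⟩
  | a::b::l, x, h, he => ⟨h.1, upath_snoc (b::l) h.2
      (fun c hc => he c (by rw [List.getLast?_cons_cons]; exact hc))⟩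

lemma active_snoc : ∀ (l : List V) {x : V}, G.ActivePath Z l →
    (∀ a b l0, l = l0 ++ [a, b] → G.ActiveTriple Z a b x) → G.ActivePath Z (l ++ [x])
  | [], x, _, _ => trivial
  | [a], x, _, _ => trivial
  | [a, b], x, _, ht => ⟨ht a b [] rfl, trivial⟩
  | a::b::c::l, x, h, ht =>
      ⟨h.1, active_snoc (b::c::l) h.2
        (fun a' b' l0 hl => ht a' b' (a::l0) (by rw [hl]; rfl))⟩

lemma upath_reverse : ∀ {l : List V}, G.IsUPath l → G.IsUPath l.reverse
  | [], h => absurd h (by simp [DAG.IsUPath])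
  | [x], _ => trivial
  | x::y::l, h => by
      rw [List.reverse_cons]
      refine upath_snoc _ (upath_reverse h.2) ?_
      intro b hb
      rw [List.getLast?_reverse] at hb
      simp only [List.head?_cons, Option.some.injEq] at hb
      subst hb
      exact h.1.symm

lemma active_reverse : ∀ {l : List V}, G.ActivePath Z l → G.ActivePath Z l.reverse
  | [], _ => trivial
  | x::l, h => by
      rw [List.reverse_cons]
      refine active_snoc _ (active_reverse (active_tail h)) ?_
      intro a b l0 hl
      have hl' : l = b :: a :: l0.reverse := by
        have := congrArg List.reverse hl
        simpa using this
      subst hl'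
      exact triple_symm h.1

lemma descend : ∀ (l : List V) {v u : V}, G.IsUPath (v::u::l) → G.ActivePath Z (v::u::l) →
    G.E v u → (∃ w, Relation.ReflTransGen G.E v w ∧ w ∈ Z) ∨
      (∃ t, (v::u::l).getLast? = some t ∧ Relation.TransGen G.E v t)
  | [], v, u, _, _, he => Or.inr ⟨u, rfl, Relation.TransGen.single he⟩
  | c::l, v, u, hu, ha, he => by
      rcases ha.1 with ⟨_, _, w, hw, hwZ⟩ | ⟨hnc, _⟩
      · exact Or.inl ⟨w, Relation.ReflTransGen.head he hw, hwZ⟩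
      · have huc : G.E u c := by
          rcases hu.2.1 with h | h
          · exact h
          · exact absurd ⟨he, h⟩ hnc
        rcases descend l hu.2 (active_tail ha) huc with ⟨w, hw, hz⟩ | ⟨t, ht, htg⟩
        · exact Or.inl ⟨w, Relation.ReflTransGen.head he hw, hz⟩
        · exact Or.inr ⟨t, by rw [List.getLast?_cons_cons]; exact ht,
            Relation.TransGen.head he htg⟩

end DSepAux
namespace DSepAux

variable {V : Type} {G : DAG V} {Z : Set V}

/-- There is an active walk from `v` to `X`. -/
def Reach (G : DAG V) (Z : Set V) (X : V) (v : V) : Prop :=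
  ∃ p : List V, G.IsUPath p ∧ G.ActivePath Z p ∧ p.head? = some v ∧ p.getLast? = some X

variable {X Y : V}


lemma head?_decomp {α : Type*} {p : List α} {v : α} (h : p.head? = some v) :
    ∃ rest, p = v :: rest := by
  cases p with
  | nil => simp at h
  | cons a rest =>
      simp only [List.head?_cons, Option.some.injEq] at h
      exact ⟨rest, by rw [h]⟩

lemma reach_self : Reach G Z X X := ⟨[X], trivial, trivial, rfl, rfl⟩

lemma reach_cons {u v : V} (h : Reach G Z X v) (he : G.E u v ∨ G.E v u)
    (hT : ∀ n, G.ActiveTriple Z u v n) : Reach G Z X u := by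
  obtain ⟨p, hup, hap, hh, hl⟩ := h
  obtain ⟨rest, rfl⟩ := head?_decomp hh
  cases rest with
    | nil =>
        simp only [List.getLast?_singleton, Option.some.injEq] at hl
        exact ⟨[u, v], ⟨he, trivial⟩, trivial, rfl, by simp [hl]⟩
    | cons n l =>
        exact ⟨u::v::n::l, ⟨he, hup⟩, ⟨hT n, hap⟩, rfl, by
          rw [← hl]; rfl⟩

lemma reach_cons2 {u c v : V} (h : Reach G Z X v) (he1 : G.E u c ∨ G.E c u)
    (he2 : G.E c v ∨ G.E v c) (hT1 : ∀ n, G.ActiveTriple Z c v n)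
    (hT2 : G.ActiveTriple Z u c v) : Reach G Z X u := by
  have hc : Reach G Z X c := reach_cons h he2 hT1
  obtain ⟨p, hup, hap, hh, hl⟩ := hc
  -- we rebuild, since we need the triple at c to be the concrete one
  obtain ⟨p0, hup0, hap0, hh0, hl0⟩ := h
  obtain ⟨rest, rfl⟩ := head?_decomp hh0
  cases rest with
    | nil =>
        simp only [List.getLast?_singleton, Option.some.injEq] at hl0
        exact ⟨[u, c, v], ⟨he1, he2, trivial⟩, ⟨hT2, trivial⟩, rfl, by simp [hl0]⟩
    | cons n l =>
        exact ⟨u::c::v::n::l, ⟨he1, he2, hup0⟩, ⟨hT2, hT1 n, hap0⟩, rfl, by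
          rw [← hl0]; rfl⟩

lemma fwd : ∀ {w : V}, Relation.ReflTransGen G.E w X →
    (∀ t, Relation.ReflTransGen G.E w t → t ∉ Z) →
    ∃ p : List V, G.IsUPath p ∧ G.ActivePath Z p ∧ p.head? = some w ∧ p.getLast? = some X ∧
      (p = [w] ∨ ∃ n l, p = w :: n :: l ∧ G.E w n) := by
  intro w hw
  induction hw using Relation.ReflTransGen.head_induction_on with
  | refl => exact fun _ => ⟨[X], trivial, trivial, rfl, rfl, Or.inl rfl⟩
  | @head a c h' h ih =>
      intro hz
      obtain ⟨p, hup, hap, hh, hl, hprop⟩ := ih (fun t ht => hz t (ht.head h'))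
      obtain ⟨rest, rfl⟩ := head?_decomp hh
      refine ⟨a::c::rest, ⟨Or.inl h', hup⟩, ?_, rfl, by rw [← hl]; rfl,
          Or.inr ⟨c, rest, rfl, h'⟩⟩
      cases rest with
      | nil => trivial
      | cons n l =>
          refine ⟨Or.inr ⟨?_, hz c (Relation.ReflTransGen.single h')⟩, hap⟩
          rintro ⟨-, hnc⟩
          rcases hprop with h0 | ⟨n', l', heq, hcn⟩
          · simp at h0
          · simp only [List.cons.injEq] at heq
            exact no2 hcn (heq.2.1 ▸ hnc)

lemma revdir : ∀ {w y : V}, Relation.ReflTransGen G.E w y →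
    (∀ t, Relation.ReflTransGen G.E w t → t ∉ Z) → Reach G Z X w → Reach G Z X y := by
  intro w y hw
  induction hw using Relation.ReflTransGen.head_induction_on with
  | refl => exact fun _ h => h
  | @head a c h' h ih =>
      intro hz hr
      refine ih (fun t ht => hz t (ht.head h')) ?_
      refine reach_cons hr (Or.inr h') ?_
      intro n
      exact Or.inr ⟨fun hh => no2 h' hh.1, hz a Relation.ReflTransGen.refl⟩

lemma reach_of_fwd {u w : V} (he : G.E u w) (hw : Relation.ReflTransGen G.E w X)
    (hz : ∀ t, Relation.ReflTransGen G.E w t → t ∉ Z) : Reach G Z X u := by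
  obtain ⟨p, hup, hap, hh, hl, hprop⟩ := fwd hw hz
  rcases hprop with rfl | ⟨n, l, rfl, hwn⟩
  · simp only [List.getLast?_singleton, Option.some.injEq] at hl
    exact ⟨[u, w], ⟨Or.inl he, trivial⟩, trivial, rfl, by simp [hl]⟩
  · refine ⟨u::w::n::l, ⟨Or.inl he, hup⟩, ⟨?_, hap⟩, rfl, by rw [← hl]; rfl⟩
    exact Or.inr ⟨fun hh => no2 hwn hh.2, hz w Relation.ReflTransGen.refl⟩

/-- The ancestral set of `Z ∪ {X, Y}`. -/
def Aset (G : DAG V) (Z : Set V) (X Y : V) (v : V) : Prop :=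
  ∃ d, Relation.ReflTransGen G.E v d ∧ (d ∈ Z ∨ d = X ∨ d = Y)

/-- Moral adjacency on the ancestral set, avoiding `Z`. -/
def adj (G : DAG V) (Z : Set V) (X Y : V) (u w : V) : Prop :=
  u ∉ Z ∧ w ∉ Z ∧ ∃ c, Aset G Z X Y c ∧ (u = c ∨ G.E u c) ∧ (w = c ∨ G.E w c)

lemma step {v u : V} (hv : Reach G Z X v) (ha : adj G Z X Y v u) :
    Reach G Z X u ∨ Reach G Z X Y := by
  obtain ⟨hvZ, huZ, c, hcA, hvc, huc⟩ := ha
  by_cases hZd : ∃ w, Relation.ReflTransGen G.E c w ∧ w ∈ Z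
  · -- c has a descendant in Z
    obtain ⟨w, hcw, hwZ⟩ := hZd
    rcases hvc with rfl | hvc
    · -- c = v
      rcases huc with rfl | huc
      · exact Or.inl hv
      · -- E u v, v has a descendant in Z
        refine Or.inl (reach_cons hv (Or.inl huc) ?_)
        intro n
        by_cases hcol : G.E u v ∧ G.E n v
        · exact Or.inl ⟨hcol.1, hcol.2, w, hcw, hwZ⟩
        · exact Or.inr ⟨hcol, hvZ⟩
    · rcases huc with rfl | huc
      · -- E v u : chain out of v
        refine Or.inl (reach_cons hv (Or.inr hvc) ?_)
        intro n
        exact Or.inr ⟨fun hh => no2 hvc hh.1, hvZ⟩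
      · -- common child c with descendant in Z
        refine Or.inl (reach_cons2 hv (Or.inl huc) (Or.inr hvc) ?_ ?_)
        · intro n
          exact Or.inr ⟨fun hh => no2 hvc hh.1, hvZ⟩
        · exact Or.inl ⟨huc, hvc, w, hcw, hwZ⟩
  · -- no descendant of c is in Z
    push_neg at hZd
    obtain ⟨d, hcd, hd⟩ := hcA
    have hznot : ∀ t, Relation.ReflTransGen G.E c t → t ∉ Z := fun t ht => hZd t ht
    rcases hd with hdZ | rfl | rfl
    · exact absurd hdZ (hZd d hcd)
    · -- d = X : directed path from c to X avoiding Z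
      rcases huc with rfl | huc
      · rcases hvc with rfl | hvc
        · exact Or.inl hv
        · -- u = c, E v c : chain into u=c... use fwd from c and prepend? u = c itself:
          -- u = c is an ancestor of X with no Z descendants: walk is the directed path itself
          obtain ⟨p, h1, h2, h3, h4, -⟩ := fwd hcd hznot
          exact Or.inl ⟨p, h1, h2, h3, h4⟩
      · exact Or.inl (reach_of_fwd huc hcd hznot)
    · -- d = Y
      rcases hvc with rfl | hvc
      · exact Or.inr (revdir hcd hznot hv)
      · -- prepend c to the walk at v, then follow directed path to Y
        have hc : Reach G Z X c := by
          refine reach_cons hv (Or.inr hvc) ?_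
          intro n
          exact Or.inr ⟨fun hh => no2 hvc hh.1, hvZ⟩
        exact Or.inr (revdir hcd hznot hc)

lemma reach_of_M {u : V} (h : Relation.ReflTransGen (adj G Z X Y) X u) :
    Reach G Z X u ∨ Reach G Z X Y := by
  induction h with
  | refl => exact Or.inl reach_self
  | tail hM hadj ih =>
      rcases ih with hr | hr
      · exact step hr hadj
      · exact Or.inr hr

end DSepAux
namespace DSepAux

variable {V : Type} {G : DAG V} {Z : Set V}

lemma not_nodup_split {p : List V} (h : ¬ p.Nodup) :
    ∃ (v : V) (l1 l2 l3 : List V), p = l1 ++ v :: l2 ++ v :: l3 := by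
  induction p with
  | nil => simp at h
  | cons x xs ih =>
    by_cases hx : x ∈ xs
    · obtain ⟨s, t, hst⟩ := List.append_of_mem hx
      exact ⟨x, [], s, t, by simp [hst]⟩
    · have hxs : ¬ xs.Nodup := by
        intro hn
        exact h (List.nodup_cons.2 ⟨hx, hn⟩)
      obtain ⟨v, l1, l2, l3, rfl⟩ := ih hxs
      exact ⟨v, x::l1, l2, l3, rfl⟩

lemma getLast?_decomp {α : Type*} {l : List α} {b : α} (h : l.getLast? = some b) :
    ∃ l', l = l' ++ [b] := by
  induction l with
  | nil => simp at h
  | cons a l ih =>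
    cases l with
    | nil =>
        simp only [List.getLast?_singleton, Option.some.injEq] at h
        exact ⟨[], by simp [h]⟩
    | cons c l' =>
        rw [List.getLast?_cons_cons] at h
        obtain ⟨m, hm⟩ := ih h
        exact ⟨a :: m, by rw [hm]; rfl⟩

/-- The key surgery fact: the junction triple obtained by cutting out the loop
between two occurrences of `v` is active. -/
lemma junction {l1 l2 l3 : List V} {v b c : V}
    (hup : G.IsUPath (l1 ++ (v :: (l2 ++ (v :: l3)))))
    (hap : G.ActivePath Z (l1 ++ (v :: (l2 ++ (v :: l3)))))
    (hb : l1.getLast? = some b) (hc : l3.head? = some c) :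
    G.ActiveTriple Z b v c := by
  have hs1u : G.IsUPath (v :: (l2 ++ (v :: l3))) :=
    upath_append_right l1 hup (by simp)
  have hs1a : G.ActivePath Z (v :: (l2 ++ (v :: l3))) :=
    active_append_right l1 hap
  cases l2 with
  | nil =>
      rcases hs1u.1 with h | h <;> exact absurd h no_self
  | cons e l2' =>
  obtain ⟨l1', rfl⟩ := getLast?_decomp hb
  obtain ⟨l3', rfl⟩ := head?_decomp hc
  -- triple at the first occurrence : T b v e
  have h1 : G.ActivePath Z (b :: v :: e :: (l2' ++ v :: c :: l3')) := by
    have heq : (l1' ++ [b]) ++ (v :: ((e :: l2') ++ (v :: (c :: l3'))))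
        = l1' ++ (b :: v :: e :: (l2' ++ (v :: (c :: l3')))) := by simp
    rw [heq] at hap
    exact active_append_right l1' hap
  have Tbve : G.ActiveTriple Z b v e := h1.1
  -- triple at the second occurrence : T b2 v c
  obtain ⟨b2, hb2⟩ : ∃ b2, (e :: l2').getLast? = some b2 := by
    cases h : (e :: l2').getLast? with
    | none => simp [List.getLast?_eq_none_iff] at h
    | some b2 => exact ⟨b2, rfl⟩
  obtain ⟨l2'', hm⟩ := getLast?_decomp hb2
  have h2 : G.ActivePath Z (b2 :: v :: c :: l3') := by
    have heq : (l1' ++ [b]) ++ (v :: ((e :: l2') ++ (v :: (c :: l3'))))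
        = ((l1' ++ [b]) ++ (v :: l2'')) ++ (b2 :: v :: c :: l3') := by
      rw [hm]; simp
    rw [heq] at hap
    exact active_append_right _ hap
  have Tb2vc : G.ActiveTriple Z b2 v c := h2.1
  by_cases hvZ : v ∈ Z
  · rcases Tbve with ⟨hbv, _, _⟩ | ⟨_, hnz⟩
    · rcases Tb2vc with ⟨_, hcv, _⟩ | ⟨_, hnz⟩
      · exact Or.inl ⟨hbv, hcv, v, Relation.ReflTransGen.refl, hvZ⟩
      · exact absurd hvZ hnz
    · exact absurd hvZ hnz
  · by_cases hcol : G.E b v ∧ G.E c v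
    · have hdesc : ∃ w, Relation.ReflTransGen G.E v w ∧ w ∈ Z := by
        rcases Tbve with ⟨_, _, w, hw, hwZ⟩ | ⟨hnc, _⟩
        · exact ⟨w, hw, hwZ⟩
        · have hve : G.E v e := by
            rcases hs1u.1 with h | h
            · exact h
            · exact absurd ⟨hcol.1, h⟩ hnc
          -- the loop segment v :: e :: l2' ++ [v]
          have hseq : (v :: ((e :: l2') ++ [v])) ++ (c :: l3')
              = v :: ((e :: l2') ++ (v :: (c :: l3'))) := by simp
          have hsegu : G.IsUPath (v :: e :: (l2' ++ [v])) := by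
            have := upath_append_left (v :: ((e :: l2') ++ [v])) (r := c :: l3')
              (by rw [hseq]; exact hs1u) (by simp)
            simpa using this
          have hsega : G.ActivePath Z (v :: e :: (l2' ++ [v])) := by
            have := active_append_left (v :: ((e :: l2') ++ [v])) (r := c :: l3')
              (by rw [hseq]; exact hs1a)
            simpa using this
          rcases descend (l2' ++ [v]) hsegu hsega hve with h | ⟨t, ht, htg⟩
          · exact h
          · have : t = v := by
              have : (v :: e :: (l2' ++ [v])).getLast? = some v := by
                have : v :: e :: (l2' ++ [v]) = (v :: e :: l2') ++ [v] := by simp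
                rw [this, List.getLast?_concat]
              rw [this] at ht
              exact (Option.some.injEq _ _ ▸ ht).symm
            exact absurd (this ▸ htg) (G.acyclic v)
      obtain ⟨w, hw, hwZ⟩ := hdesc
      exact Or.inl ⟨hcol.1, hcol.2, w, hw, hwZ⟩
    · exact Or.inr ⟨hcol, hvZ⟩

lemma dedup : ∀ (n : ℕ) (p : List V), p.length ≤ n → G.IsUPath p → G.ActivePath Z p →
    ∃ q : List V, q.Nodup ∧ G.IsUPath q ∧ G.ActivePath Z q ∧
      q.head? = p.head? ∧ q.getLast? = p.getLast? := by
  intro n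
  induction n with
  | zero =>
    intro p hlen hu _
    have : p = [] := List.length_eq_zero_iff.1 (Nat.le_zero.1 hlen)
    subst this
    exact absurd hu (by simp [DAG.IsUPath])
  | succ n ih =>
    intro p hlen hu ha
    by_cases hnd : p.Nodup
    · exact ⟨p, hnd, hu, ha, rfl, rfl⟩
    obtain ⟨v, l1, l2, l3, rfl⟩ := not_nodup_split hnd
    have hcan : l1 ++ v :: l2 ++ v :: l3 = l1 ++ (v :: (l2 ++ (v :: l3))) := by simp
    rw [hcan] at hu ha
    -- the shortened walk
    have hq_u : G.IsUPath (l1 ++ v :: l3) := by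
      refine upath_glue l1 ?_ ?_
      · have heq : l1 ++ (v :: (l2 ++ (v :: l3))) = (l1 ++ [v]) ++ (l2 ++ (v :: l3)) := by simp
        exact upath_append_left _ (by rw [← heq]; exact hu) (by simp)
      · have heq : l1 ++ (v :: (l2 ++ (v :: l3))) = (l1 ++ (v :: l2)) ++ (v :: l3) := by simp
        exact upath_append_right (l1 ++ (v :: l2)) (by rw [← heq]; exact hu) (by simp)
    have hq_a : G.ActivePath Z (l1 ++ v :: l3) := by
      refine active_glue l1 ?_ ?_ ?_
      · have heq : l1 ++ (v :: (l2 ++ (v :: l3))) = (l1 ++ [v]) ++ (l2 ++ (v :: l3)) := by simp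
        exact active_append_left _ (by rw [← heq]; exact ha)
      · have heq : l1 ++ (v :: (l2 ++ (v :: l3))) = (l1 ++ (v :: l2)) ++ (v :: l3) := by simp
        exact active_append_right (l1 ++ (v :: l2)) (by rw [← heq]; exact ha)
      · intro b c hbb hcc
        exact junction hu ha hbb hcc
    have hlen' : (l1 ++ v :: l3).length ≤ n := by
      have : (l1 ++ v :: l2 ++ v :: l3).length ≤ n + 1 := hlen
      simp only [List.length_append, List.length_cons] at this ⊢
      omega
    obtain ⟨q, h1, h2, h3, h4, h5⟩ := ih (l1 ++ v :: l3) hlen' hq_u hq_a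
    refine ⟨q, h1, h2, h3, ?_, ?_⟩
    · rw [h4]
      cases l1 <;> simp
    · rw [h5]
      cases l3 with
      | nil =>
          have e1 : (l1 ++ [v]).getLast? = some v := List.getLast?_concat
          have e2 : (l1 ++ v :: l2 ++ [v]).getLast? = some v := by
            have : l1 ++ v :: l2 ++ [v] = (l1 ++ v :: l2) ++ [v] := by simp
            rw [this, List.getLast?_concat]
          rw [e1, e2]
      | cons c l3' =>
          have e1 : (l1 ++ v :: c :: l3').getLast? = (c :: l3').getLast? := by
            have : l1 ++ v :: c :: l3' = (l1 ++ [v]) ++ (c :: l3') := by simp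
            rw [this, List.getLast?_append_of_ne_nil _ (by simp)]
          have e2 : (l1 ++ v :: l2 ++ v :: c :: l3').getLast? = (c :: l3').getLast? := by
            have : l1 ++ v :: l2 ++ v :: c :: l3' = (l1 ++ v :: l2 ++ [v]) ++ (c :: l3') := by
              simp
            rw [this, List.getLast?_append_of_ne_nil _ (by simp)]
          rw [e1, e2]

end DSepAux
namespace DSepAux

variable {V : Type} {G : DAG V} {Z : Set V} {X Y : V}

lemma noM (hsep : ¬ G.DConn Z X Y) : ¬ Relation.ReflTransGen (adj G Z X Y) X Y := by
  intro h
  have hre : Reach G Z X Y := by rcases reach_of_M h with h | h <;> exact h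
  obtain ⟨p, hu, ha, hh, hl⟩ := hre
  refine hsep ?_
  obtain ⟨q, h1, h2, h3, h4, h5⟩ := dedup p.reverse.length p.reverse le_rfl
    (upath_reverse hu) (active_reverse ha)
  exact ⟨q, h1, h2, by rw [h4, List.head?_reverse, hl], by
    rw [h5, List.getLast?_reverse, hh], h3⟩

end DSepAux
namespace DSepAux

open Finset

variable {V : Type} [Fintype V] [DecidableEq V] {G : DAG V} {val : V → Type}
  [∀ v, Fintype (val v)]

open Classical in
/-- Partially marginalized unnormalized measure: only the factors in `S` are kept,
and coordinates outside `S` are pinned to `z`. -/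
noncomputable def gg (B : BN V G val) (z : ∀ v, val v) (S : Finset V)
    (φ : (∀ v, val v) → Prop) : ℝ :=
  ∑ a : ∀ v, val v, if φ a ∧ ∀ v ∉ S, a v = z v then ∏ v ∈ S, B.cpt v a else 0

lemma pr_eq_gg (B : BN V G val) (z : ∀ v, val v) (φ : (∀ v, val v) → Prop) :
    B.pr φ = gg B z Finset.univ φ := by
  classical
  unfold BN.pr gg BN.joint
  apply Finset.sum_congr rfl
  intro a _
  exact if_congr (by simp) rfl rfl

lemma gg_erase (B : BN V G val) (z : ∀ v, val v) (φ : (∀ v, val v) → Prop)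
    (S : Finset V) (t : V) (ht : t ∈ S)
    (hsink : ∀ u ∈ S, ¬ G.E t u)
    (hφ : ∀ a x, φ (Function.update a t x) ↔ φ a) :
    gg B z S φ = gg B z (S.erase t) φ := by
  classical
  set e := Equiv.piSplitAt t val with he
  have hsum : ∀ (F : (∀ v, val v) → ℝ),
      ∑ a, F a = ∑ q : val t × (∀ j : {j // j ≠ t}, val j), F (e.symm q) :=
    fun F => (Equiv.sum_comp e.symm F).symm
  unfold gg
  rw [hsum, hsum, Fintype.sum_prod_type, Fintype.sum_prod_type, Finset.sum_comm,
    Finset.sum_comm (s := (Finset.univ : Finset (val t)))]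
  apply Finset.sum_congr rfl
  intro f _
  set b : val t → ∀ v, val v := fun x => e.symm (x, f) with hbdef
  have hbt : ∀ x, b x t = x := by
    intro x; simp [hbdef, he, Equiv.piSplitAt]
  have hbv : ∀ x x' v, v ≠ t → b x v = b x' v := by
    intro x x' v hv; simp [hbdef, he, Equiv.piSplitAt, hv]
  have hupd : ∀ x x', b x = Function.update (b x') t x := by
    intro x x'
    funext v
    by_cases hv : v = t
    · subst hv; rw [Function.update_self, hbt]
    · rw [Function.update_of_ne hv, hbv x x' v hv]
  have hφx : ∀ x x', φ (b x) ↔ φ (b x') := by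
    intro x x'
    rw [hupd x x', hφ]
  by_cases hC : φ (b (z t)) ∧ ∀ v ∉ S, b (z t) v = z v
  · have hφall : ∀ x, φ (b x) := fun x => (hφx x (z t)).2 hC.1
    have hCall : ∀ x, ∀ v ∉ S, b x v = z v := by
      intro x v hv
      rw [hbv x (z t) v (fun h => hv (h ▸ ht))]
      exact hC.2 v hv
    have hprodc : ∀ x, ∏ v ∈ S.erase t, B.cpt v (b x) = ∏ v ∈ S.erase t, B.cpt v (b (z t)) := by
      intro x
      apply Finset.prod_congr rfl
      intro v hv
      apply B.cpt_local
      · exact hbv _ _ _ (Finset.ne_of_mem_erase hv)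
      · intro u hu
        have hut : u ≠ t := by
          rintro rfl
          exact hsink v (Finset.mem_of_mem_erase hv) hu
        exact hbv _ _ _ hut
    have hL : ∑ x, (if φ (b x) ∧ ∀ v ∉ S, b x v = z v then ∏ v ∈ S, B.cpt v (b x) else 0)
        = ∏ v ∈ S.erase t, B.cpt v (b (z t)) := by
      have : ∀ x, (if φ (b x) ∧ ∀ v ∉ S, b x v = z v then ∏ v ∈ S, B.cpt v (b x) else 0)
          = B.cpt t (b x) * ∏ v ∈ S.erase t, B.cpt v (b (z t)) := by
        intro x
        rw [if_pos ⟨hφall x, hCall x⟩, ← Finset.mul_prod_erase S _ ht, hprodc x]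
      rw [Finset.sum_congr rfl (fun x _ => this x), ← Finset.sum_mul]
      have : ∑ x, B.cpt t (b x) = 1 := by
        have := B.cpt_sum t (b (z t))
        rw [← this]
        apply Finset.sum_congr rfl
        intro x _
        rw [← hupd x (z t)]
      rw [this, one_mul]
    have hR : ∑ x, (if φ (b x) ∧ ∀ v ∉ S.erase t, b x v = z v
          then ∏ v ∈ S.erase t, B.cpt v (b x) else 0)
        = ∏ v ∈ S.erase t, B.cpt v (b (z t)) := by
      have hpt : ∀ x, (if φ (b x) ∧ ∀ v ∉ S.erase t, b x v = z v
          then ∏ v ∈ S.erase t, B.cpt v (b x) else 0)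
          = if x = z t then ∏ v ∈ S.erase t, B.cpt v (b (z t)) else 0 := by
        intro x
        by_cases hx : x = z t
        · subst hx
          rw [if_pos, if_pos rfl]
          refine ⟨hφall _, ?_⟩
          intro v hv
          by_cases hvt : v = t
          · subst hvt; exact hbt _
          · exact hCall _ v (fun hvS => hv (Finset.mem_erase.2 ⟨hvt, hvS⟩))
        · rw [if_neg, if_neg hx]
          rintro ⟨-, hall⟩
          exact hx (by rw [← hbt x]; exact hall t (Finset.notMem_erase t S))
      rw [Finset.sum_congr rfl (fun x _ => hpt x), Finset.sum_ite_eq' Finset.univ (z t)]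
      simp
    rw [hL, hR]
  · have hL : ∀ x, ¬ (φ (b x) ∧ ∀ v ∉ S, b x v = z v) := by
      intro x ⟨h1, h2⟩
      refine hC ⟨(hφx (z t) x).2 h1, ?_⟩
      intro v hv
      rw [hbv (z t) x v (fun h => hv (h ▸ ht))]
      exact h2 v hv
    have hR : ∀ x, ¬ (φ (b x) ∧ ∀ v ∉ S.erase t, b x v = z v) := by
      intro x ⟨h1, h2⟩
      refine hL x ⟨h1, ?_⟩
      intro v hv
      have hvt : v ≠ t := fun h => hv (h ▸ ht)
      exact h2 v (fun hmem => hv (Finset.mem_of_mem_erase hmem))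
    refine (Finset.sum_eq_zero fun x _ => ?_).trans (Finset.sum_eq_zero fun x _ => ?_).symm
    · exact if_neg (hL x)
    · exact if_neg (hR x)

lemma exists_sink : ∀ (n : ℕ) (T : Finset V), T.card ≤ n → T.Nonempty →
    ∃ t ∈ T, ∀ u ∈ T, ¬ G.E t u := by
  intro n
  induction n with
  | zero =>
    intro T hc hne
    rw [Nat.le_zero, Finset.card_eq_zero] at hc
    subst hc
    exact absurd hne (by simp)
  | succ n ih =>
    intro T hc hne
    classical
    obtain ⟨t0, ht0⟩ := hne
    by_cases h : ∀ u ∈ T, ¬ G.E t0 u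
    · exact ⟨t0, ht0, h⟩
    · push_neg at h
      obtain ⟨u0, hu0, hE⟩ := h
      set T' := T.filter (fun w => Relation.TransGen G.E t0 w) with hT'
      have hss : T' ⊂ T := by
        refine Finset.ssubset_iff_of_subset (Finset.filter_subset _ _) |>.2 ?_
        exact ⟨t0, ht0, by simp [hT', G.acyclic t0]⟩
      have hcard : T'.card ≤ n := by
        have := Finset.card_lt_card hss
        omega
      have hne' : T'.Nonempty := ⟨u0, by simp [hT', hu0, Relation.TransGen.single hE]⟩
      obtain ⟨t, htT', hsink⟩ := ih T' hcard hne'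
      rw [hT', Finset.mem_filter] at htT'
      refine ⟨t, htT'.1, ?_⟩
      intro u hu hEtu
      refine hsink u ?_ hEtu
      rw [hT', Finset.mem_filter]
      exact ⟨hu, htT'.2.trans (Relation.TransGen.single hEtu)⟩

lemma gg_to_A (B : BN V G val) (z : ∀ v, val v) (φ : (∀ v, val v) → Prop) (AF : Finset V)
    (hanc : ∀ u v, G.E u v → v ∈ AF → u ∈ AF)
    (hφ : ∀ t ∉ AF, ∀ a x, φ (Function.update a t x) ↔ φ a) :
    gg B z Finset.univ φ = gg B z AF φ := by
  classical
  suffices h : ∀ (n : ℕ) (S : Finset V), S.card ≤ n → AF ⊆ S → gg B z S φ = gg B z AF φ by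
    exact h (Finset.univ.card) Finset.univ le_rfl (Finset.subset_univ _)
  intro n
  induction n with
  | zero =>
    intro S hc hsub
    rw [Nat.le_zero, Finset.card_eq_zero] at hc
    subst hc
    rw [Finset.subset_empty.1 hsub]
  | succ n ih =>
    intro S hc hsub
    by_cases hS : S ⊆ AF
    · rw [Finset.Subset.antisymm hS hsub]
    · have hne : (S \ AF).Nonempty := by
        rw [Finset.sdiff_nonempty]
        exact hS
      obtain ⟨t, htT, hsink⟩ := exists_sink (S \ AF).card (S \ AF) le_rfl hne
      rw [Finset.mem_sdiff] at htT
      have hstep : gg B z S φ = gg B z (S.erase t) φ := by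
        refine gg_erase B z φ S t htT.1 ?_ (hφ t htT.2)
        intro u hu hEtu
        by_cases huA : u ∈ AF
        · exact htT.2 (hanc t u hEtu huA)
        · exact hsink u (Finset.mem_sdiff.2 ⟨hu, huA⟩) hEtu
      rw [hstep]
      refine ih (S.erase t) ?_ ?_
      · have := Finset.card_erase_lt_of_mem htT.1
        omega
      · intro a ha
        exact Finset.mem_erase.2 ⟨fun h => htT.2 (h ▸ ha), hsub ha⟩

end DSepAux
namespace DSepAux

open Finset

variable {V : Type} [Fintype V] [DecidableEq V] {G : DAG V} {val : V → Type}
  [∀ v, Fintype (val v)]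

lemma pr_congr (B : BN V G val) {φ ψ : (∀ v, val v) → Prop} (h : ∀ a, φ a ↔ ψ a) :
    B.pr φ = B.pr ψ := by
  classical
  unfold BN.pr
  exact Finset.sum_congr rfl fun a _ => if_congr (h a) rfl rfl

lemma pr_false (B : BN V G val) : B.pr (fun _ => False) = 0 := by
  classical
  unfold BN.pr
  simp

lemma pair_trick {α : Type*} [Fintype α] (f1 fC fx fy : α → ℝ) (e : α × α ≃ α × α)
    (h : ∀ p : α × α, f1 (e p).1 * fC (e p).2 = fx p.1 * fy p.2) :
    (∑ a, f1 a) * (∑ b, fC b) = (∑ a, fx a) * (∑ b, fy b) := by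
  have h1 : (∑ p : α × α, f1 p.1 * fC p.2) = ∑ i, ∑ j, f1 i * fC j :=
    Fintype.sum_prod_type _
  have h2 : (∑ p : α × α, fx p.1 * fy p.2) = ∑ i, ∑ j, fx i * fy j :=
    Fintype.sum_prod_type _
  rw [Finset.sum_mul_sum, Finset.sum_mul_sum, ← h1, ← h2,
    ← Equiv.sum_comp e (fun p => f1 p.1 * fC p.2)]
  exact Finset.sum_congr rfl fun p _ => h p

theorem main (B : BN V G val) (Z : Set V) (X Y : V)
    (hsep : ¬ G.DConn Z X Y) (x : val X) (y : val Y) (z : ∀ v, val v)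
    (hXZ : X ∉ Z) (hYZ : Y ∉ Z) :
    B.pr (fun a => a X = x ∧ a Y = y ∧ ∀ v ∈ Z, a v = z v) *
        B.pr (fun a => ∀ v ∈ Z, a v = z v) =
      B.pr (fun a => a X = x ∧ ∀ v ∈ Z, a v = z v) *
        B.pr (fun a => a Y = y ∧ ∀ v ∈ Z, a v = z v) := by
  classical
  have hXA : Aset G Z X Y X := ⟨X, Relation.ReflTransGen.refl, Or.inr (Or.inl rfl)⟩
  have hYA : Aset G Z X Y Y := ⟨Y, Relation.ReflTransGen.refl, Or.inr (Or.inr rfl)⟩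
  set AF : Finset V := Finset.univ.filter (fun v => Aset G Z X Y v) with hAF
  have hmemAF : ∀ v, v ∈ AF ↔ Aset G Z X Y v := by intro v; simp [hAF]
  have hanc : ∀ u v, G.E u v → v ∈ AF → u ∈ AF := by
    intro u v hE hv
    rw [hmemAF] at hv ⊢
    obtain ⟨d, hd, hD⟩ := hv
    exact ⟨d, hd.head hE, hD⟩
  have hZA : ∀ v ∈ Z, v ∈ AF := fun v hv =>
    (hmemAF v).2 ⟨v, Relation.ReflTransGen.refl, Or.inl hv⟩
  have hnotA : ∀ t, t ∉ AF → t ≠ X ∧ t ≠ Y ∧ t ∉ Z := by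
    intro t ht
    refine ⟨?_, ?_, ?_⟩
    · rintro rfl; exact ht ((hmemAF t).2 hXA)
    · rintro rfl; exact ht ((hmemAF t).2 hYA)
    · intro hz; exact ht (hZA t hz)
  -- update-invariance of all four events
  have hupd : ∀ t, t ∉ AF → ∀ (P : (∀ v, val v) → Prop),
      (∀ a (xx : val t), P (Function.update a t xx) ↔ P a) →
      ∀ a (xx : val t),
        ((P (Function.update a t xx) ∧ ∀ v ∈ Z, (Function.update a t xx) v = z v) ↔
          (P a ∧ ∀ v ∈ Z, a v = z v)) := by
    intro t ht P hP a xx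
    obtain ⟨-, -, htZ⟩ := hnotA t ht
    have hC : (∀ v ∈ Z, (Function.update a t xx) v = z v) ↔ (∀ v ∈ Z, a v = z v) := by
      constructor <;> intro h v hv
      · have := h v hv
        rwa [Function.update_of_ne (fun e => htZ (by rw [← e]; exact hv))] at this
      · rw [Function.update_of_ne (fun e => htZ (by rw [← e]; exact hv))]
        exact h v hv
    rw [hP, hC]
  have hupdX : ∀ t, t ∉ AF → ∀ a (xx : val t), (Function.update a t xx) X = a X := by
    intro t ht a xx
    exact Function.update_of_ne (fun e => (hnotA t ht).1 e.symm) _ _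
  have hupdY : ∀ t, t ∉ AF → ∀ a (xx : val t), (Function.update a t xx) Y = a Y := by
    intro t ht a xx
    exact Function.update_of_ne (fun e => (hnotA t ht).2.1 e.symm) _ _
  -- reduce pr to gg over AF
  have hgg : ∀ (P : (∀ v, val v) → Prop),
      (∀ t, t ∉ AF → ∀ a (xx : val t), P (Function.update a t xx) ↔ P a) →
      B.pr (fun a => P a ∧ ∀ v ∈ Z, a v = z v) =
        gg B z AF (fun a => P a ∧ ∀ v ∈ Z, a v = z v) := by
    intro P hP
    rw [pr_eq_gg B z]
    exact gg_to_A B z _ AF hanc (fun t ht a xx => hupd t ht P (hP t ht) a xx)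
  have g1 := hgg (fun a => a X = x ∧ a Y = y)
    (fun t ht a xx => by simp only [hupdX t ht, hupdY t ht])
  have gC := hgg (fun _ => True) (fun t ht a xx => Iff.rfl)
  have gx := hgg (fun a => a X = x) (fun t ht a xx => by simp only [hupdX t ht])
  have gy := hgg (fun a => a Y = y) (fun t ht a xx => by simp only [hupdY t ht])
  -- massage the statement's predicates into the `P ∧ C` form
  have e1 : B.pr (fun a => a X = x ∧ a Y = y ∧ ∀ v ∈ Z, a v = z v) =
      gg B z AF (fun a => (a X = x ∧ a Y = y) ∧ ∀ v ∈ Z, a v = z v) := by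
    rw [pr_congr B (ψ := fun a => (a X = x ∧ a Y = y) ∧ ∀ v ∈ Z, a v = z v)
      (fun a => by tauto)]
    exact g1
  have eC : B.pr (fun a => ∀ v ∈ Z, a v = z v) =
      gg B z AF (fun a => True ∧ ∀ v ∈ Z, a v = z v) := by
    rw [pr_congr B (ψ := fun a => True ∧ ∀ v ∈ Z, a v = z v) (fun a => by tauto)]
    exact gC
  have ex : B.pr (fun a => a X = x ∧ ∀ v ∈ Z, a v = z v) =
      gg B z AF (fun a => (a X = x) ∧ ∀ v ∈ Z, a v = z v) := gx
  have ey : B.pr (fun a => a Y = y ∧ ∀ v ∈ Z, a v = z v) =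
      gg B z AF (fun a => (a Y = y) ∧ ∀ v ∈ Z, a v = z v) := gy
  rw [e1, eC, ex, ey]
  -- now the core argument
  have hnoM : ¬ Relation.ReflTransGen (adj G Z X Y) X Y := noM hsep
  set σ : V → Prop :=
    fun v => v ∈ Z ∨ ¬ Aset G Z X Y v ∨ Relation.ReflTransGen (adj G Z X Y) X v with hσ
  set m : (∀ v, val v) → (∀ v, val v) → (∀ v, val v) :=
    fun a b v => if σ v then a v else b v with hm
  have hσX : σ X := Or.inr (Or.inr Relation.ReflTransGen.refl)
  have hσY : ¬ σ Y := by
    rintro (h | h | h)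
    · exact hYZ h
    · exact h hYA
    · exact hnoM h
  have hmX : ∀ a b, m a b X = a X := fun a b => if_pos hσX
  have hmY : ∀ a b, m a b Y = b Y := fun a b => if_neg hσY
  have hinv : ∀ a b, m (m a b) (m b a) = a := by
    intro a b
    funext v
    by_cases h : σ v
    · show (if σ v then (if σ v then a v else b v) else _) = a v
      rw [if_pos h, if_pos h]
    · show (if σ v then _ else (if σ v then b v else a v)) = a v
      rw [if_neg h, if_neg h]
  have hCm : ∀ {a b}, (∀ v ∈ Z, a v = z v) → (∀ v ∈ Z, b v = z v) →
      (∀ v ∈ Z, m a b v = z v) := by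
    intro a b ha hb v hv
    show (if σ v then a v else b v) = z v
    by_cases h : σ v
    · rw [if_pos h]; exact ha v hv
    · rw [if_neg h]; exact hb v hv
  have hOm : ∀ {a b}, (∀ v ∉ AF, a v = z v) → (∀ v ∉ AF, b v = z v) →
      (∀ v ∉ AF, m a b v = z v) := by
    intro a b ha hb v hv
    show (if σ v then a v else b v) = z v
    by_cases h : σ v
    · rw [if_pos h]; exact ha v hv
    · rw [if_neg h]; exact hb v hv
  -- the side lemma
  have hside : ∀ v, Aset G Z X Y v → ∀ a b, (∀ u ∈ Z, a u = z u) → (∀ u ∈ Z, b u = z u) →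
      (B.cpt v (m a b) = B.cpt v a ∧ B.cpt v (m b a) = B.cpt v b) ∨
      (B.cpt v (m a b) = B.cpt v b ∧ B.cpt v (m b a) = B.cpt v a) := by
    intro v hvA a b hCa hCb
    by_cases hs : ∃ u, (u = v ∨ G.E u v) ∧ u ∉ Z ∧ Relation.ReflTransGen (adj G Z X Y) X u
    · obtain ⟨u0, hu0f, hu0Z, hu0M⟩ := hs
      have hσu : ∀ u, (u = v ∨ G.E u v) → σ u := by
        intro u hu
        by_cases hZ : u ∈ Z
        · exact Or.inl hZ
        · exact Or.inr (Or.inr (hu0M.tail ⟨hu0Z, hZ, v, hvA, hu0f, hu⟩))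
      left
      constructor
      · exact B.cpt_local v _ _ (if_pos (hσu v (Or.inl rfl)))
          (fun u hE => if_pos (hσu u (Or.inr hE)))
      · exact B.cpt_local v _ _ (if_pos (hσu v (Or.inl rfl)))
          (fun u hE => if_pos (hσu u (Or.inr hE)))
    · have hAu : ∀ u, (u = v ∨ G.E u v) → Aset G Z X Y u := by
        rintro u (rfl | hE)
        · exact hvA
        · obtain ⟨d, hd1, hd2⟩ := hvA
          exact ⟨d, hd1.head hE, hd2⟩
      have hmb : ∀ u, (u = v ∨ G.E u v) → m a b u = b u := by
        intro u hu
        show (if σ u then a u else b u) = b u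
        by_cases hZ : u ∈ Z
        · by_cases h : σ u
          · rw [if_pos h, hCa u hZ, hCb u hZ]
          · rw [if_neg h]
        · have hnσ : ¬ σ u := by
            rintro (h | h | h)
            · exact hZ h
            · exact h (hAu u hu)
            · exact hs ⟨u, hu, hZ, h⟩
          rw [if_neg hnσ]
      have hma : ∀ u, (u = v ∨ G.E u v) → m b a u = a u := by
        intro u hu
        show (if σ u then b u else a u) = a u
        by_cases hZ : u ∈ Z
        · by_cases h : σ u
          · rw [if_pos h, hCa u hZ, hCb u hZ]
          · rw [if_neg h]
        · have hnσ : ¬ σ u := by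
            rintro (h | h | h)
            · exact hZ h
            · exact h (hAu u hu)
            · exact hs ⟨u, hu, hZ, h⟩
          rw [if_neg hnσ]
      right
      constructor
      · exact B.cpt_local v _ _ (hmb v (Or.inl rfl)) (fun u hE => hmb u (Or.inr hE))
      · exact B.cpt_local v _ _ (hma v (Or.inl rfl)) (fun u hE => hma u (Or.inr hE))
  have hJ : ∀ a b, (∀ u ∈ Z, a u = z u) → (∀ u ∈ Z, b u = z u) →
      (∏ v ∈ AF, B.cpt v (m a b)) * (∏ v ∈ AF, B.cpt v (m b a)) =
      (∏ v ∈ AF, B.cpt v a) * (∏ v ∈ AF, B.cpt v b) := by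
    intro a b hCa hCb
    rw [← Finset.prod_mul_distrib, ← Finset.prod_mul_distrib]
    apply Finset.prod_congr rfl
    intro v hv
    rcases hside v ((hmemAF v).1 hv) a b hCa hCb with ⟨h1, h2⟩ | ⟨h1, h2⟩
    · rw [h1, h2]
    · rw [h1, h2, mul_comm]
  set e : ((∀ v, val v) × (∀ v, val v)) ≃ ((∀ v, val v) × (∀ v, val v)) :=
    { toFun := fun p => (m p.1 p.2, m p.2 p.1),
      invFun := fun p => (m p.1 p.2, m p.2 p.1),
      left_inv := fun p => Prod.ext (hinv p.1 p.2) (hinv p.2 p.1),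
      right_inv := fun p => Prod.ext (hinv p.1 p.2) (hinv p.2 p.1) } with hedef
  unfold gg
  refine pair_trick _ _ _ _ e ?_
  rintro ⟨a, b⟩
  simp only [hedef, Equiv.coe_fn_mk]
  by_cases h : ((a X = x ∧ ∀ v ∈ Z, a v = z v) ∧ ∀ v ∉ AF, a v = z v) ∧
      ((b Y = y ∧ ∀ v ∈ Z, b v = z v) ∧ ∀ v ∉ AF, b v = z v)
  · obtain ⟨⟨⟨haX, haC⟩, haO⟩, ⟨⟨hbY, hbC⟩, hbO⟩⟩ := h
    have c1 : ((m a b X = x ∧ m a b Y = y) ∧ ∀ v ∈ Z, m a b v = z v) ∧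
        ∀ v ∉ AF, m a b v = z v :=
      ⟨⟨⟨by rw [hmX]; exact haX, by rw [hmY]; exact hbY⟩, hCm haC hbC⟩, hOm haO hbO⟩
    have c2 : (True ∧ ∀ v ∈ Z, m b a v = z v) ∧ ∀ v ∉ AF, m b a v = z v :=
      ⟨⟨trivial, hCm hbC haC⟩, hOm hbO haO⟩
    rw [if_pos c1, if_pos c2, if_pos ⟨⟨haX, haC⟩, haO⟩, if_pos ⟨⟨hbY, hbC⟩, hbO⟩]
    exact hJ a b haC hbC
  · have hrhs : (if (a X = x ∧ ∀ v ∈ Z, a v = z v) ∧ ∀ v ∉ AF, a v = z v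
          then ∏ v ∈ AF, B.cpt v a else 0) *
        (if (b Y = y ∧ ∀ v ∈ Z, b v = z v) ∧ ∀ v ∉ AF, b v = z v
          then ∏ v ∈ AF, B.cpt v b else 0) = 0 := by
      by_cases ha' : (a X = x ∧ ∀ v ∈ Z, a v = z v) ∧ ∀ v ∉ AF, a v = z v
      · rw [if_neg (fun hb' => h ⟨ha', hb'⟩), mul_zero]
      · rw [if_neg ha', zero_mul]
    rw [hrhs]
    by_cases hl : (((m a b X = x ∧ m a b Y = y) ∧ ∀ v ∈ Z, m a b v = z v) ∧
        ∀ v ∉ AF, m a b v = z v) ∧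
        ((True ∧ ∀ v ∈ Z, m b a v = z v) ∧ ∀ v ∉ AF, m b a v = z v)
    · exfalso
      apply h
      obtain ⟨⟨⟨⟨hX1, hY1⟩, hC1⟩, hO1⟩, ⟨⟨-, hC2⟩, hO2⟩⟩ := hl
      have hCa : ∀ v ∈ Z, a v = z v := by
        have := hCm hC1 hC2; rwa [hinv] at this
      have hCb : ∀ v ∈ Z, b v = z v := by
        have := hCm hC2 hC1; rwa [hinv] at this
      have hOa : ∀ v ∉ AF, a v = z v := by
        have := hOm hO1 hO2; rwa [hinv] at this
      have hOb : ∀ v ∉ AF, b v = z v := by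
        have := hOm hO2 hO1; rwa [hinv] at this
      exact ⟨⟨⟨by rw [← hmX a b]; exact hX1, hCa⟩, hOa⟩,
        ⟨⟨by rw [← hmY a b]; exact hY1, hCb⟩, hOb⟩⟩
    · rcases not_and_or.1 hl with h1 | h2
      · rw [if_neg h1, zero_mul]
      · rw [if_neg h2, mul_zero]

end DSepAux
/-- Soundness of d-separation: if `X` and `Y` are d-separated given `Z` in a DAG, then in
every Bayesian network parameterization of the DAG, `X` and `Y` are conditionally
independent given `Z`. -/
theorem stmt6 {V : Type} [Fintype V] [DecidableEq V] {G : DAG V} {val : V → Type}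
    [∀ v, Fintype (val v)] (B : BN V G val) (Z : Set V) (X Y : V)
    (hsep : ¬ G.DConn Z X Y) (x : val X) (y : val Y) (z : ∀ v, val v) :
    B.pr (fun a => a X = x ∧ a Y = y ∧ ∀ v ∈ Z, a v = z v) *
        B.pr (fun a => ∀ v ∈ Z, a v = z v) =
      B.pr (fun a => a X = x ∧ ∀ v ∈ Z, a v = z v) *
        B.pr (fun a => a Y = y ∧ ∀ v ∈ Z, a v = z v) := by
  classical
  by_cases hXZ : X ∈ Z
  · by_cases hx : z X = x
    · rw [DSepAux.pr_congr B (ψ := fun a => a Y = y ∧ ∀ v ∈ Z, a v = z v)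
        (fun a => ⟨fun h => ⟨h.2.1, h.2.2⟩, fun h => ⟨by rw [h.2 X hXZ, hx], h.1, h.2⟩⟩),
        DSepAux.pr_congr B (φ := fun a => a X = x ∧ ∀ v ∈ Z, a v = z v)
          (ψ := fun a => ∀ v ∈ Z, a v = z v)
          (fun a => ⟨fun h => h.2, fun h => ⟨by rw [h X hXZ, hx], h⟩⟩)]
      exact mul_comm _ _
    · rw [DSepAux.pr_congr B (ψ := fun _ => False)
        (fun a => ⟨fun h => hx (by rw [← h.2.2 X hXZ, h.1]), False.elim⟩),
        DSepAux.pr_congr B (φ := fun a => a X = x ∧ ∀ v ∈ Z, a v = z v)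
          (ψ := fun _ => False)
          (fun a => ⟨fun h => hx (by rw [← h.2 X hXZ, h.1]), False.elim⟩),
        DSepAux.pr_false, zero_mul, zero_mul]
  · by_cases hYZ : Y ∈ Z
    · by_cases hy : z Y = y
      · rw [DSepAux.pr_congr B (ψ := fun a => a X = x ∧ ∀ v ∈ Z, a v = z v)
          (fun a => ⟨fun h => ⟨h.1, h.2.2⟩, fun h => ⟨h.1, by rw [h.2 Y hYZ, hy], h.2⟩⟩),
          DSepAux.pr_congr B (φ := fun a => a Y = y ∧ ∀ v ∈ Z, a v = z v)
            (ψ := fun a => ∀ v ∈ Z, a v = z v)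
            (fun a => ⟨fun h => h.2, fun h => ⟨by rw [h Y hYZ, hy], h⟩⟩)]
      · rw [DSepAux.pr_congr B (ψ := fun _ => False)
          (fun a => ⟨fun h => hy (by rw [← h.2.2 Y hYZ, h.2.1]), False.elim⟩),
          DSepAux.pr_congr B (φ := fun a => a Y = y ∧ ∀ v ∈ Z, a v = z v)
            (ψ := fun _ => False)
            (fun a => ⟨fun h => hy (by rw [← h.2 Y hYZ, h.1]), False.elim⟩),
          DSepAux.pr_false, zero_mul, mul_zero]
    · exact DSepAux.main B Z X Y hsep x y z hXZ hYZ
end
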